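/- arXiv:1910.11733 — 2 statements merged into one kernel-verified Lean document; each statement's English description precedes it below -/
import Mathlib

section
/- Let G be a graph of bounded degree whose isoperimetric profile satisfies C₁/n^β ≤ Λ(n) ≤ C₂/n^β for all sufficiently large n, with constants C₁, C₂, β > 0. Then there exists a constant A > 0 such that for all sufficiently large n, Sep(n)/n ≥ A·Λ(n); in particular Sep(n) ≥ A'·n^{1−β} for some A' > 0. -/
open Set Filter

namespace SepProfile

variable {V : Type*}

/-- Edge boundary of a vertex set: pairs (a,b) with a ∈ A, b ∉ A, a ~ b. -/
def ebd (G : SimpleGraph V) (A : Set V) : Set (V × V) :=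
  {p | G.Adj p.1 p.2 ∧ p.1 ∈ A ∧ p.2 ∉ A}

/-- Isoperimetric ratio |∂A|/|A|. -/
noncomputable def ratio (G : SimpleGraph V) (A : Set V) : ℝ :=
  ((ebd G A).ncard : ℝ) / (A.ncard : ℝ)

/-- Isoperimetric profile Λ(n). -/
noncomputable def isop (G : SimpleGraph V) (n : ℕ) : ℝ :=
  sInf {x | ∃ A : Set V, A.Finite ∧ A.Nonempty ∧ A.ncard ≤ n ∧ x = ratio G A}

/-- Boundary of A within F (edges of the induced subgraph on F leaving A). -/
def inbd (G : SimpleGraph V) (F A : Set V) : Set (V × V) :=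
  {p | G.Adj p.1 p.2 ∧ p.1 ∈ A ∧ p.2 ∈ F \ A}

/-- Cheeger constant of the subgraph induced on F. -/
noncomputable def cheeger (G : SimpleGraph V) (F : Set V) : ℝ :=
  sInf {x | ∃ A : Set V, A ⊆ F ∧ A.Nonempty ∧ 2 * A.ncard ≤ F.ncard ∧
    x = ((inbd G F A).ncard : ℝ) / (A.ncard : ℝ)}

/-- Separation profile Sep(n) = sup_{|F| ≤ n} |F|·h(F). -/
noncomputable def sep (G : SimpleGraph V) (n : ℕ) : ℝ :=
  sSup {x | ∃ F : Set V, F.Finite ∧ F.ncard ≤ n ∧ x = (F.ncard : ℝ) * cheeger G F}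

/-- A finite set is optimal if it realizes the isoperimetric profile. -/
def Optimal (G : SimpleGraph V) (F : Set V) : Prop :=
  F.Finite ∧ F.Nonempty ∧ ratio G F = isop G F.ncard

/-- An integer is optimal if some optimal set has that cardinality. -/
def OptimalInt (G : SimpleGraph V) (n : ℕ) : Prop :=
  ∃ F : Set V, Optimal G F ∧ F.ncard = n

/-- Ball of radius n around v for the graph metric. -/
def ball (G : SimpleGraph V) (v : V) (n : ℕ) : Set V :=
  {u | G.Reachable v u ∧ G.dist v u ≤ n}

/-- All degrees bounded by D. -/
def DegLE (G : SimpleGraph V) (D : ℕ) : Prop :=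
  ∀ v, (G.neighborSet v).ncard ≤ D

/-- Amenability: the isoperimetric profile tends to 0. -/
def Amenable (G : SimpleGraph V) : Prop :=
  Tendsto (fun n => isop G n) atTop (nhds 0)

/-- F together with its outer vertex neighbourhood. -/
def nbh (G : SimpleGraph V) (F : Set V) : Set V :=
  F ∪ {b | ∃ a ∈ F, G.Adj a b}

/-- Partial self-isomorphisms: every finite F has a disjoint isomorphic copy
(together with its boundary neighbourhood). -/
def HasPSI (G : SimpleGraph V) : Prop :=
  ∀ F : Set V, F.Finite →
    ∃ F' : Set V, F'.Finite ∧ Disjoint F F' ∧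
      ∃ e : G.induce (nbh G F) ≃g G.induce (nbh G F'),
        ∀ x : nbh G F, (x : V) ∈ F ↔ ((e x : V) ∈ F')

/-- δ-geometric decay function p_f^δ(x) = inf {y > 0 : f(y) ≤ δ·f(x)}. -/
noncomputable def gdecay (f : ℝ → ℝ) (δ x : ℝ) : ℝ :=
  sInf {y | 0 < y ∧ f y ≤ δ * f x}

end SepProfile

section Aux

open SepProfile Real

variable {V : Type*} {G : SimpleGraph V}

lemma aux_ratio_nonneg (G : SimpleGraph V) (A : Set V) : 0 ≤ ratio G A :=
  div_nonneg (Nat.cast_nonneg _) (Nat.cast_nonneg _)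

lemma aux_isop_bddBelow (G : SimpleGraph V) (n : ℕ) :
    BddBelow {x | ∃ A : Set V, A.Finite ∧ A.Nonempty ∧ A.ncard ≤ n ∧ x = ratio G A} := by
  refine ⟨0, ?_⟩
  rintro x ⟨A, -, -, -, rfl⟩
  exact aux_ratio_nonneg G A

lemma aux_isop_nonneg (G : SimpleGraph V) (n : ℕ) : 0 ≤ isop G n := by
  apply Real.sInf_nonneg
  rintro x ⟨A, -, -, -, rfl⟩
  exact aux_ratio_nonneg G A

lemma aux_isop_le_ratio {A : Set V} (hA : A.Finite) (hne : A.Nonempty) {n : ℕ}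
    (h : A.ncard ≤ n) : isop G n ≤ ratio G A :=
  csInf_le (aux_isop_bddBelow G n) ⟨A, hA, hne, h, rfl⟩

lemma aux_inbd_subset (G : SimpleGraph V) (F A : Set V) : inbd G F A ⊆ ebd G A := by
  rintro p ⟨h, h1, h2⟩
  exact ⟨h, h1, h2.2⟩

/-- Key counting identity. -/
lemma aux_identity {F A : Set V} (hAF : A ⊆ F)
    (h1 : (ebd G A).Finite) (h2 : (ebd G (F \ A)).Finite) :
    (ebd G A).ncard + (ebd G (F \ A)).ncard
      = 2 * (inbd G F A).ncard + (ebd G F).ncard := by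
  set X : Set (V × V) := {p | G.Adj p.1 p.2 ∧ p.1 ∈ A ∧ p.2 ∉ F} with hX
  set Y : Set (V × V) := {p | G.Adj p.1 p.2 ∧ p.1 ∈ F \ A ∧ p.2 ∉ F} with hY
  have hXA : X ⊆ ebd G A := by
    rintro p ⟨h, h1, h2⟩; exact ⟨h, h1, fun hp => h2 (hAF hp)⟩
  have hIA : inbd G F A ⊆ ebd G A := aux_inbd_subset G F A
  have hYB : Y ⊆ ebd G (F \ A) := by
    rintro p ⟨h, h1, h2⟩; exact ⟨h, h1, fun hp => h2 hp.1⟩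
  have hSB : Prod.swap '' inbd G F A ⊆ ebd G (F \ A) := by
    rintro ⟨u, v⟩ ⟨⟨a, b⟩, ⟨hab, ha, hb⟩, heq⟩
    cases heq
    exact ⟨hab.symm, hb, fun h => h.2 ha⟩
  have eqA : ebd G A = inbd G F A ∪ X := by
    ext p
    simp only [ebd, inbd, mem_setOf_eq, mem_union, mem_diff, hX]
    tauto
  have eqF : ebd G F = X ∪ Y := by
    ext p
    have h1 : p.1 ∈ A → p.1 ∈ F := fun h => hAF h
    simp only [ebd, mem_setOf_eq, mem_union, mem_diff, hX, hY]
    tauto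
  have eqB : ebd G (F \ A) = Y ∪ Prod.swap '' inbd G F A := by
    ext p
    rw [Set.image_swap_eq_preimage_swap]
    have hc : G.Adj p.1 p.2 ↔ G.Adj p.2 p.1 := ⟨SimpleGraph.Adj.symm, SimpleGraph.Adj.symm⟩
    have h2 : p.2 ∈ A → p.2 ∈ F := fun h => hAF h
    simp only [ebd, inbd, mem_setOf_eq, mem_union, mem_diff, mem_preimage, Prod.fst_swap,
      Prod.snd_swap, hY]
    tauto
  have dIX : Disjoint (inbd G F A) X := by
    rw [Set.disjoint_left]
    rintro p ⟨-, -, hp⟩ ⟨-, -, hp'⟩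
    exact hp' hp.1
  have dYS : Disjoint Y (Prod.swap '' inbd G F A) := by
    rw [Set.disjoint_left]
    rintro p ⟨-, -, hp⟩ hq
    obtain ⟨⟨a, b⟩, ⟨-, ha, -⟩, heq⟩ := hq
    cases heq
    exact hp (hAF ha)
  have dXY : Disjoint X Y := by
    rw [Set.disjoint_left]
    rintro p ⟨-, hp, -⟩ ⟨-, hq, -⟩
    exact hq.2 hp
  have hXfin : X.Finite := h1.subset hXA
  have hIfin : (inbd G F A).Finite := h1.subset hIA
  have hYfin : Y.Finite := h2.subset hYB
  have hSfin : (Prod.swap '' inbd G F A).Finite := h2.subset hSB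
  have n1 : (ebd G A).ncard = (inbd G F A).ncard + X.ncard := by
    rw [eqA, Set.ncard_union_eq dIX hIfin hXfin]
  have n2 : (ebd G (F \ A)).ncard = Y.ncard + (Prod.swap '' inbd G F A).ncard := by
    rw [eqB, Set.ncard_union_eq dYS hYfin hSfin]
  have n3 : (ebd G F).ncard = X.ncard + Y.ncard := by
    rw [eqF, Set.ncard_union_eq dXY hXfin hYfin]
  have n4 : (Prod.swap '' inbd G F A).ncard = (inbd G F A).ncard :=
    Set.ncard_image_of_injective _ Prod.swap_injective
  omega

/-- Bernoulli-type inequality. -/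
lemma aux_bernoulli {σ x y : ℝ} (hx : 0 < x) (hxy : x ≤ y) (h0 : 0 ≤ σ) (h1 : σ ≤ 1) :
    (x + y) ^ σ ≤ y ^ σ + σ * x ^ σ := by
  have hy : 0 < y := hx.trans_le hxy
  have hxy' : 0 ≤ x / y := by positivity
  have key : (x + y) ^ σ = y ^ σ * (1 + x / y) ^ σ := by
    rw [← Real.mul_rpow hy.le (by positivity)]
    rw [mul_add, mul_one, mul_div_cancel₀ _ hy.ne']
    ring_nf
  rw [key]
  have hb : (1 + x / y) ^ σ ≤ 1 + σ * (x / y) :=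
    rpow_one_add_le_one_add_mul_self (by linarith) h0 h1
  have h2 : y ^ σ * (1 + x / y) ^ σ ≤ y ^ σ * (1 + σ * (x / y)) :=
    mul_le_mul_of_nonneg_left hb (Real.rpow_nonneg hy.le σ)
  refine h2.trans ?_
  have h3 : y ^ σ * (1 + σ * (x / y)) = y ^ σ + σ * (x * y ^ (σ - 1)) := by
    rw [Real.rpow_sub hy, Real.rpow_one]
    field_simp
  rw [h3]
  have h4 : y ^ (σ - 1) ≤ x ^ (σ - 1) :=
    Real.rpow_le_rpow_of_nonpos hx hxy (by linarith)
  have h5 : x * x ^ (σ - 1) = x ^ σ := by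
    nth_rewrite 1 [← Real.rpow_one x]
    rw [← Real.rpow_add hx]
    ring_nf
  have h6 : σ * (x * y ^ (σ - 1)) ≤ σ * (x * x ^ (σ - 1)) :=
    mul_le_mul_of_nonneg_left (mul_le_mul_of_nonneg_left h4 hx.le) h0
  rw [h5] at h6
  linarith

/-- Cardinality bound from degree bound. -/
lemma aux_ebd_card {D : ℕ} (hdeg : DegLE G D) (hN : ∀ v, (G.neighborSet v).Finite)
    {A : Set V} (hA : A.Finite) :
    (ebd G A).Finite ∧ (ebd G A).ncard ≤ D * A.ncard := by
  refine Set.Finite.induction_on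
    (motive := fun A _ => (ebd G A).Finite ∧ (ebd G A).ncard ≤ D * A.ncard) A hA ?_ ?_
  · have : ebd G (∅ : Set V) = ∅ := by
      ext p; simp [ebd]
    simp [this]
  · intro a s ha hs IH
    have hsub : ebd G (insert a s) ⊆ ({a} ×ˢ G.neighborSet a) ∪ ebd G s := by
      rintro p ⟨h, h1, h2⟩
      rcases h1 with h1 | h1
      · left
        refine ⟨h1, ?_⟩
        rw [h1] at h
        exact h
      · right
        exact ⟨h, h1, fun hp => h2 (Or.inr hp)⟩
    have hfin1 : (({a} : Set V) ×ˢ G.neighborSet a).Finite :=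
      (Set.finite_singleton a).prod (hN a)
    have hfin : (ebd G (insert a s)).Finite := (hfin1.union IH.1).subset hsub
    refine ⟨hfin, ?_⟩
    have hc1 : (({a} : Set V) ×ˢ G.neighborSet a).ncard ≤ D := by
      rw [Set.singleton_prod, Set.ncard_image_of_injective _ (Prod.mk_right_injective a)]
      exact hdeg a
    calc (ebd G (insert a s)).ncard
        ≤ (({a} : Set V) ×ˢ G.neighborSet a ∪ ebd G s).ncard :=
          Set.ncard_le_ncard hsub (hfin1.union IH.1)
      _ ≤ (({a} : Set V) ×ˢ G.neighborSet a).ncard + (ebd G s).ncard :=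
          Set.ncard_union_le _ _
      _ ≤ D + D * s.ncard := Nat.add_le_add hc1 IH.2
      _ ≤ D * (insert a s).ncard := by
          rw [Set.ncard_insert_of_notMem ha hs]
          ring_nf
          omega

/-- Finiteness of value sets. -/
lemma aux_finite_vals {D : ℕ} (hdeg : DegLE G D) (hN : ∀ v, (G.neighborSet v).Finite)
    (n : ℕ) (g : ℕ → ℝ) :
    {x : ℝ | ∃ A : Set V, A.Finite ∧ A.Nonempty ∧ A.ncard ≤ n ∧
      x = ((ebd G A).ncard : ℝ) / g A.ncard}.Finite := by
  apply Set.Finite.subset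
    (Set.Finite.image (fun p : ℕ × ℕ => (p.1 : ℝ) / g p.2)
      ((Set.finite_Iic (D * n)).prod (Set.finite_Iic n)))
  rintro x ⟨A, hA, hne, hle, rfl⟩
  refine ⟨((ebd G A).ncard, A.ncard), ⟨?_, ?_⟩, rfl⟩
  · exact mem_Iic.2 (le_trans (aux_ebd_card hdeg hN hA).2 (Nat.mul_le_mul_left D hle))
  · exact mem_Iic.2 hle

lemma aux_cheeger_nonneg (G : SimpleGraph V) (F : Set V) : 0 ≤ cheeger G F := by
  apply Real.sInf_nonneg
  rintro x ⟨A, -, -, -, rfl⟩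
  positivity

lemma aux_cheeger_le_D {D : ℕ} (hdeg : DegLE G D) (hN : ∀ v, (G.neighborSet v).Finite)
    {F : Set V} (hF : F.Finite) : cheeger G F ≤ D := by
  by_cases hs : {x : ℝ | ∃ A : Set V, A ⊆ F ∧ A.Nonempty ∧ 2 * A.ncard ≤ F.ncard ∧
      x = ((inbd G F A).ncard : ℝ) / (A.ncard : ℝ)}.Nonempty
  · obtain ⟨x, A, hAF, hAne, hA2, rfl⟩ := hs
    have hAfin : A.Finite := hF.subset hAF
    have hc := aux_ebd_card hdeg hN hAfin
    have hle : (inbd G F A).ncard ≤ D * A.ncard :=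
      le_trans (Set.ncard_le_ncard (aux_inbd_subset G F A) hc.1) hc.2
    have ha : 0 < (A.ncard : ℝ) := by
      have := (Set.ncard_pos hAfin).2 hAne
      exact_mod_cast this
    have hle2 : ((inbd G F A).ncard : ℝ) / (A.ncard : ℝ) ≤ D := by
      rw [div_le_iff₀ ha]
      calc ((inbd G F A).ncard : ℝ) ≤ (D * A.ncard : ℕ) := by exact_mod_cast hle
        _ = (D : ℝ) * (A.ncard : ℝ) := by push_cast; ring
    refine le_trans (csInf_le ?_ ?_) hle2
    · refine ⟨0, ?_⟩
      rintro y ⟨B, -, -, -, rfl⟩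
      positivity
    · exact ⟨A, hAF, hAne, hA2, rfl⟩
  · rw [Set.not_nonempty_iff_eq_empty] at hs
    rw [cheeger, hs, Real.sInf_empty]
    positivity

lemma aux_sep_bddAbove {D : ℕ} (hdeg : DegLE G D) (hN : ∀ v, (G.neighborSet v).Finite)
    (n : ℕ) :
    BddAbove {x : ℝ | ∃ F : Set V, F.Finite ∧ F.ncard ≤ n ∧
      x = (F.ncard : ℝ) * cheeger G F} := by
  refine ⟨(n : ℝ) * D, ?_⟩
  rintro x ⟨F, hF, hle, rfl⟩
  apply mul_le_mul
  · exact_mod_cast hle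
  · exact aux_cheeger_le_D hdeg hN hF
  · exact aux_cheeger_nonneg G F
  · positivity

end Aux


open SepProfile Real

set_option maxHeartbeats 1000000 in
theorem stmt9 {V : Type*} (G : SimpleGraph V) (D : ℕ) (hdeg : DegLE G D)
    (C₁ C₂ β : ℝ) (hC₁ : 0 < C₁) (hC₂ : 0 < C₂) (hβ : 0 < β)
    (n₀ : ℕ)
    (hiso : ∀ n : ℕ, n₀ ≤ n →
      C₁ / (n : ℝ) ^ β ≤ isop G n ∧ isop G n ≤ C₂ / (n : ℝ) ^ β) :
    (∃ A > (0:ℝ), ∃ n₁ : ℕ, ∀ n : ℕ, n₁ ≤ n →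
        A * isop G n ≤ sep G n / (n : ℝ)) ∧
    (∃ A' > (0:ℝ), ∃ n₂ : ℕ, ∀ n : ℕ, n₂ ≤ n →
        A' * (n : ℝ) ^ (1 - β) ≤ sep G n) := by
  classical
  set N₀ : ℕ := max n₀ 1 with hN₀def
  have hN₀n₀ : n₀ ≤ N₀ := le_max_left _ _
  have hN₀1 : 1 ≤ N₀ := le_max_right _ _
  have hN₀R : (1:ℝ) ≤ (N₀:ℝ) := by exact_mod_cast hN₀1
  have hN₀pos : (0:ℝ) < (N₀:ℝ) := lt_of_lt_of_le zero_lt_one hN₀R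
  -- V is nonempty
  have hV : Nonempty V := by
    by_contra h
    rw [not_nonempty_iff] at h
    have h0 : {x | ∃ A : Set V, A.Finite ∧ A.Nonempty ∧ A.ncard ≤ N₀ ∧ x = ratio G A} = ∅ := by
      ext x
      simp only [Set.mem_setOf_eq, Set.mem_empty_iff_false, iff_false]
      rintro ⟨A, -, ⟨v, -⟩, -⟩
      exact h.elim v
    have h1 : isop G N₀ = 0 := by rw [isop, h0, Real.sInf_empty]
    have h2 := (hiso N₀ hN₀n₀).1
    rw [h1] at h2
    have : 0 < C₁ / (N₀:ℝ)^β := div_pos hC₁ (Real.rpow_pos_of_pos hN₀pos β)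
    linarith
  obtain ⟨v₀⟩ := hV
  -- positivity of the profile
  have hisopos : ∀ n : ℕ, N₀ ≤ n → 0 < isop G n := by
    intro n hn
    have hnR : (1:ℝ) ≤ (n:ℝ) := le_trans hN₀R (by exact_mod_cast hn)
    have h1 := (hiso n (le_trans hN₀n₀ hn)).1
    have hp : 0 < C₁ / (n:ℝ)^β := div_pos hC₁ (Real.rpow_pos_of_pos (by linarith) β)
    linarith
  -- boundaries of finite nonempty sets are finite and nonempty
  have hfe : ∀ A : Set V, A.Finite → A.Nonempty →
      (ebd G A).Finite ∧ 1 ≤ (ebd G A).ncard := by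
    intro A hA hne
    have h1 : isop G (max A.ncard N₀) ≤ ratio G A :=
      aux_isop_le_ratio hA hne (le_max_left _ _)
    have h2 : 0 < isop G (max A.ncard N₀) := hisopos _ (le_max_right _ _)
    have h3 : 0 < ratio G A := lt_of_lt_of_le h2 h1
    have h4 : (ebd G A).ncard ≠ 0 := by
      intro h
      rw [ratio, h] at h3
      norm_num at h3
    exact ⟨Set.finite_of_ncard_ne_zero h4, Nat.one_le_iff_ne_zero.2 h4⟩
  -- local finiteness
  have hN : ∀ v : V, (G.neighborSet v).Finite := by
    intro v
    have h := (hfe {v} (Set.finite_singleton v) (Set.singleton_nonempty v)).1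
    refine (h.image Prod.snd).subset ?_
    intro b hb
    rw [SimpleGraph.mem_neighborSet] at hb
    refine ⟨(v, b), ⟨hb, rfl, ?_⟩, rfl⟩
    intro hbv
    have hbv' : b = v := hbv
    rw [hbv'] at hb
    exact G.irrefl hb
  -- β ≤ 1
  have hβ1 : β ≤ 1 := by
    by_contra hb
    push_neg at hb
    obtain ⟨n, hn⟩ := exists_nat_ge (max (N₀:ℝ) ((C₂+1) ^ (1/(β-1))))
    have hnN₀ : N₀ ≤ n := by
      have h := le_trans (le_max_left _ _) hn
      exact_mod_cast h
    have hn1 : (1:ℝ) ≤ (n:ℝ) := le_trans hN₀R (by exact_mod_cast hnN₀)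
    have hnpos : (0:ℝ) < (n:ℝ) := by linarith
    have hlb : 1/(n:ℝ) ≤ isop G n := by
      apply le_csInf
      · refine ⟨ratio G {v₀}, {v₀}, Set.finite_singleton v₀, Set.singleton_nonempty v₀, ?_, rfl⟩
        rw [Set.ncard_singleton]
        exact le_trans hN₀1 hnN₀
      · rintro x ⟨A, hA, hne, hle, rfl⟩
        have he := (hfe A hA hne).2
        have ha : 0 < A.ncard := (Set.ncard_pos hA).2 hne
        rw [ratio]
        exact div_le_div₀ (by positivity) (by exact_mod_cast he) (by exact_mod_cast ha)
          (by exact_mod_cast hle)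
    have hub := (hiso n (le_trans hN₀n₀ hnN₀)).2
    have h5 : 1/(n:ℝ) ≤ C₂/(n:ℝ)^β := le_trans hlb hub
    have hnb : (0:ℝ) < (n:ℝ)^β := Real.rpow_pos_of_pos hnpos β
    rw [div_le_div_iff₀ hnpos hnb] at h5
    have h6 : (n:ℝ)^(β-1) ≤ C₂ := by
      rw [Real.rpow_sub hnpos, Real.rpow_one, div_le_iff₀ hnpos]
      linarith
    have h7 : C₂ + 1 ≤ (n:ℝ)^(β-1) := by
      have hb1 : (0:ℝ) < β - 1 := by linarith
      have hC : (0:ℝ) ≤ C₂ + 1 := by linarith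
      have h8 : ((C₂+1) ^ (1/(β-1))) ^ (β-1) ≤ (n:ℝ)^(β-1) :=
        Real.rpow_le_rpow (Real.rpow_nonneg hC _) (le_trans (le_max_right _ _) hn) hb1.le
      rwa [← Real.rpow_mul hC, one_div, inv_mul_cancel₀ hb1.ne', Real.rpow_one] at h8
    linarith
  -- main constants
  set σ : ℝ := 1 - β/2 with hσdef
  have hσ0 : 0 < σ := by rw [hσdef]; linarith
  have hσ1 : σ < 1 := by rw [hσdef]; linarith
  have h1σ : 1 - σ = β/2 := by rw [hσdef]; ring
  set c₃ : ℝ := (C₁/C₂) ^ (2/β) with hc₃def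
  have hc₃pos : 0 < c₃ := Real.rpow_pos_of_pos (div_pos hC₁ hC₂) _
  set A' : ℝ := β/4 * C₁ * c₃ ^ (1-β) with hA'def
  have hA'pos : 0 < A' :=
    mul_pos (mul_pos (by linarith) hC₁) (Real.rpow_pos_of_pos hc₃pos _)
  obtain ⟨n₁, hn₁⟩ := exists_nat_ge
    (max (max ((N₀:ℝ)+1) ((C₂*(N₀:ℝ) + 1)^(2/β))) (2/c₃))
  -- the key estimate
  have KEY : ∀ n : ℕ, n₁ ≤ n → A' * (n:ℝ)^(1-β) ≤ sep G n := by
    intro M hM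
    have hMR : ((n₁:ℝ)) ≤ (M:ℝ) := by exact_mod_cast hM
    have hMa : (N₀:ℝ)+1 ≤ (M:ℝ) :=
      le_trans (le_trans (le_max_left _ _) (le_max_left _ _)) (le_trans hn₁ hMR)
    have hMb : (C₂*(N₀:ℝ) + 1)^(2/β) ≤ (M:ℝ) :=
      le_trans (le_trans (le_max_right _ _) (le_max_left _ _)) (le_trans hn₁ hMR)
    have hMc : 2/c₃ ≤ (M:ℝ) := le_trans (le_max_right _ _) (le_trans hn₁ hMR)
    have hMN₀ : N₀ ≤ M := by
      have h : (N₀:ℝ) ≤ (M:ℝ) := by linarith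
      exact_mod_cast h
    have hMn₀ : n₀ ≤ M := le_trans hN₀n₀ hMN₀
    have hM1R : (1:ℝ) ≤ (M:ℝ) := le_trans hN₀R (by exact_mod_cast hMN₀)
    have hMpos : (0:ℝ) < (M:ℝ) := by linarith
    have hMβ : (0:ℝ) < (M:ℝ)^β := Real.rpow_pos_of_pos hMpos β
    have hMβ2 : (0:ℝ) < (M:ℝ)^(β/2) := Real.rpow_pos_of_pos hMpos _
    have hMhalf : (M:ℝ)^β = (M:ℝ)^(β/2) * (M:ℝ)^(β/2) := by
      rw [← Real.rpow_add hMpos]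
      ring_nf
    -- the minimizing set for the weighted boundary functional
    set S : Set ℝ := {x | ∃ A : Set V, A.Finite ∧ A.Nonempty ∧ A.ncard ≤ M ∧
      x = ((ebd G A).ncard : ℝ) / (A.ncard : ℝ)^σ} with hSdef
    have hSfin : S.Finite := aux_finite_vals hdeg hN M (fun a => (a:ℝ)^σ)
    have hSne : S.Nonempty := by
      refine ⟨_, {v₀}, Set.finite_singleton v₀, Set.singleton_nonempty v₀, ?_, rfl⟩
      rw [Set.ncard_singleton]
      exact le_trans hN₀1 hMN₀
    set μ : ℝ := sInf S with hμdef
    have hμmem : μ ∈ S := hSne.csInf_mem hSfin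
    obtain ⟨F, hF, hFne, hFM, hμeq⟩ := hμmem
    set m : ℕ := F.ncard with hmdef
    have hm1 : 1 ≤ m := (Set.ncard_pos hF).2 hFne
    have hm1R : (1:ℝ) ≤ (m:ℝ) := by exact_mod_cast hm1
    have hmpos : (0:ℝ) < (m:ℝ) := by linarith
    have hmM : (m:ℝ) ≤ (M:ℝ) := by exact_mod_cast hFM
    have hμlb : ∀ x ∈ S, μ ≤ x := fun x hx => csInf_le hSfin.bddBelow hx
    have hmsp : (0:ℝ) < (m:ℝ)^σ := Real.rpow_pos_of_pos hmpos σ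
    have hmβ : (0:ℝ) < (m:ℝ)^β := Real.rpow_pos_of_pos hmpos β
    have hmβ2 : (0:ℝ) < (m:ℝ)^(β/2) := Real.rpow_pos_of_pos hmpos _
    have hμnn : 0 ≤ μ := by
      rw [hμeq]
      positivity
    -- upper bound on μ via the optimal isoperimetric set at scale M
    have hμub : μ ≤ C₂ / (M:ℝ)^(β/2) := by
      have hTfin : {x | ∃ A : Set V, A.Finite ∧ A.Nonempty ∧ A.ncard ≤ M ∧
          x = ratio G A}.Finite := aux_finite_vals hdeg hN M (fun a => (a:ℝ))
      have hTne : {x | ∃ A : Set V, A.Finite ∧ A.Nonempty ∧ A.ncard ≤ M ∧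
          x = ratio G A}.Nonempty := by
        refine ⟨_, {v₀}, Set.finite_singleton v₀, Set.singleton_nonempty v₀, ?_, rfl⟩
        rw [Set.ncard_singleton]
        exact le_trans hN₀1 hMN₀
      have hImem : isop G M ∈ {x | ∃ A : Set V, A.Finite ∧ A.Nonempty ∧ A.ncard ≤ M ∧
          x = ratio G A} := hTne.csInf_mem hTfin
      obtain ⟨F', hF', hF'ne, hF'M, hIeq⟩ := hImem
      have hm'1 : 1 ≤ F'.ncard := (Set.ncard_pos hF').2 hF'ne
      have hm'pos : (0:ℝ) < (F'.ncard:ℝ) := by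
        have h : (1:ℝ) ≤ (F'.ncard:ℝ) := by exact_mod_cast hm'1
        linarith
      have hm'M : (F'.ncard:ℝ) ≤ (M:ℝ) := by exact_mod_cast hF'M
      have h1 : μ ≤ ((ebd G F').ncard : ℝ)/(F'.ncard:ℝ)^σ :=
        hμlb _ ⟨F', hF', hF'ne, hF'M, rfl⟩
      have hm'sp : (0:ℝ) < (F'.ncard:ℝ)^σ := Real.rpow_pos_of_pos hm'pos σ
      have hpow' : (F'.ncard:ℝ)^(1-σ) * (F'.ncard:ℝ)^σ = (F'.ncard:ℝ) := by
        rw [← Real.rpow_add hm'pos, sub_add_cancel, Real.rpow_one]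
      have h2 : ((ebd G F').ncard : ℝ)/(F'.ncard:ℝ)^σ
          = ratio G F' * (F'.ncard:ℝ)^(1-σ) := by
        rw [ratio, div_mul_eq_mul_div, div_eq_div_iff hm'sp.ne' hm'pos.ne', mul_assoc, hpow']
      have h3 : ratio G F' ≤ C₂/(M:ℝ)^β := by
        rw [← hIeq]
        exact (hiso M hMn₀).2
      have h4 : (F'.ncard:ℝ)^(1-σ) ≤ (M:ℝ)^(1-σ) :=
        Real.rpow_le_rpow (by positivity) hm'M (by linarith)
      have h5 : ratio G F' * (F'.ncard:ℝ)^(1-σ) ≤ (C₂/(M:ℝ)^β) * (M:ℝ)^(1-σ) :=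
        mul_le_mul h3 h4 (by positivity) (by positivity)
      have h6 : (C₂/(M:ℝ)^β) * (M:ℝ)^(1-σ) = C₂/(M:ℝ)^(β/2) := by
        rw [h1σ, hMhalf]
        field_simp
      rw [h2] at h1
      rw [h6] at h5
      linarith
    -- the minimizer has size at least N₀
    have hmN₀ : N₀ ≤ m := by
      by_contra hcon
      push_neg at hcon
      have hmN : (m:ℝ) ≤ (N₀:ℝ) := by exact_mod_cast hcon.le
      have he1 : (1:ℝ) ≤ ((ebd G F).ncard : ℝ) := by exact_mod_cast (hfe F hF hFne).2
      have hms : (m:ℝ)^σ ≤ (N₀:ℝ) := by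
        have h1 : (m:ℝ)^σ ≤ (m:ℝ)^(1:ℝ) := Real.rpow_le_rpow_of_exponent_le hm1R hσ1.le
        rw [Real.rpow_one] at h1
        linarith
      have hlbμ : 1/(N₀:ℝ) ≤ μ := by
        rw [hμeq]
        exact div_le_div₀ (by positivity) he1 hmsp hms
      have hMb2 : C₂*(N₀:ℝ)+1 ≤ (M:ℝ)^(β/2) := by
        have h8 : ((C₂*(N₀:ℝ)+1) ^ (2/β)) ^ (β/2) ≤ (M:ℝ)^(β/2) :=
          Real.rpow_le_rpow (Real.rpow_nonneg (by positivity) _) hMb (by positivity)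
        have hexp : (2/β)*(β/2) = 1 := by field_simp
        rwa [← Real.rpow_mul (show (0:ℝ) ≤ C₂*(N₀:ℝ)+1 by positivity), hexp, Real.rpow_one] at h8
      have hlt : C₂/(M:ℝ)^(β/2) < 1/(N₀:ℝ) := by
        rw [div_lt_div_iff₀ hMβ2 hN₀pos]
        nlinarith
      linarith
    -- lower bound on μ
    have hratioF : C₁/(m:ℝ)^β ≤ ratio G F :=
      le_trans (hiso m (le_trans hN₀n₀ hmN₀)).1 (aux_isop_le_ratio hF hFne le_rfl)
    have hmhalf : (m:ℝ)^β = (m:ℝ)^(β/2) * (m:ℝ)^(β/2) := by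
      rw [← Real.rpow_add hmpos]
      ring_nf
    have hpowm : (m:ℝ)^(1-σ) * (m:ℝ)^σ = (m:ℝ) := by
      rw [← Real.rpow_add hmpos, sub_add_cancel, Real.rpow_one]
    have hμeq2 : μ = ratio G F * (m:ℝ)^(1-σ) := by
      rw [hμeq, ratio, div_mul_eq_mul_div, div_eq_div_iff hmsp.ne' hmpos.ne', mul_assoc, hpowm]
    have hμlb2 : C₁/(m:ℝ)^(β/2) ≤ μ := by
      rw [hμeq2]
      have h9 : (C₁/(m:ℝ)^β) * (m:ℝ)^(1-σ) ≤ ratio G F * (m:ℝ)^(1-σ) :=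
        mul_le_mul_of_nonneg_right hratioF (by positivity)
      have h10 : (C₁/(m:ℝ)^β) * (m:ℝ)^(1-σ) = C₁/(m:ℝ)^(β/2) := by
        rw [h1σ, hmhalf]
        field_simp
      linarith
    -- size of the minimizer is proportional to M
    have hc₃M : c₃ * (M:ℝ) ≤ (m:ℝ) := by
      have h9 : C₁/(m:ℝ)^(β/2) ≤ C₂/(M:ℝ)^(β/2) := le_trans hμlb2 hμub
      rw [div_le_div_iff₀ hmβ2 hMβ2] at h9
      have h10 : (c₃*(M:ℝ))^(β/2) ≤ (m:ℝ)^(β/2) := by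
        rw [Real.mul_rpow hc₃pos.le hMpos.le]
        have h11 : c₃^(β/2) = C₁/C₂ := by
          rw [hc₃def, ← Real.rpow_mul (div_pos hC₁ hC₂).le]
          have hexp : (2/β)*(β/2) = 1 := by field_simp
          rw [hexp, Real.rpow_one]
        rw [h11, div_mul_eq_mul_div, div_le_iff₀ hC₂]
        linarith
      exact (Real.rpow_le_rpow_iff (by positivity) hmpos.le (by positivity)).1 h10
    have hm2 : 2 ≤ m := by
      have h12 : (2:ℝ) ≤ c₃ * (M:ℝ) := by
        rw [div_le_iff₀ hc₃pos] at hMc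
        linarith
      have h13 : (2:ℝ) ≤ (m:ℝ) := by linarith
      exact_mod_cast h13
    -- boundary size of the minimizer
    have heμ : ((ebd G F).ncard:ℝ) = μ * (m:ℝ)^σ := by
      rw [hμeq, div_mul_cancel₀ _ hmsp.ne']
    have heC₁ : C₁ * (m:ℝ)^(1-β) ≤ ((ebd G F).ncard:ℝ) := by
      have h12 : C₁/(m:ℝ)^β ≤ ((ebd G F).ncard:ℝ)/(m:ℝ) := hratioF
      rw [div_le_div_iff₀ hmβ hmpos] at h12
      have h13 : (m:ℝ)^(1-β) = (m:ℝ)/(m:ℝ)^β := by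
        rw [Real.rpow_sub hmpos, Real.rpow_one]
      rw [h13, ← mul_div_assoc, div_le_iff₀ hmβ]
      linarith
    -- lower bound for the Cheeger constant of F
    have hch : β/4 * μ * (m:ℝ)^(σ-1) ≤ cheeger G F := by
      apply le_csInf
      · obtain ⟨w, hw⟩ := hFne
        refine ⟨_, {w}, Set.singleton_subset_iff.2 hw, Set.singleton_nonempty w, ?_, rfl⟩
        rw [Set.ncard_singleton]
        omega
      · rintro x ⟨B, hBF, hBne, hB2, rfl⟩
        have hBfin : B.Finite := hF.subset hBF
        set a : ℕ := B.ncard with hadef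
        have ha1 : 1 ≤ a := (Set.ncard_pos hBfin).2 hBne
        have haR : (1:ℝ) ≤ (a:ℝ) := by exact_mod_cast ha1
        have hapos : (0:ℝ) < (a:ℝ) := by linarith
        have ham : a ≤ m := Set.ncard_le_ncard hBF hF
        have hdiff : (F \ B).ncard = m - a := Set.ncard_diff hBF hBfin
        have hBCne : (F \ B).Nonempty := by
          apply (Set.ncard_pos (hF.diff : (F \ B).Finite)).1
          omega
        set b : ℕ := (F \ B).ncard with hbdef
        have hab : a + b = m := by omega
        have hba : a ≤ b := by omega
        have hbpos : (0:ℝ) < (b:ℝ) := by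
          have h14 : 1 ≤ b := by omega
          have h15 : (1:ℝ) ≤ (b:ℝ) := by exact_mod_cast h14
          linarith
        have e1 := hfe B hBfin hBne
        have e2 := hfe (F \ B) (hF.diff : (F \ B).Finite) hBCne
        have hid := aux_identity hBF e1.1 e2.1
        have hμB : μ * (a:ℝ)^σ ≤ ((ebd G B).ncard : ℝ) := by
          have h14 := hμlb _ ⟨B, hBfin, hBne, le_trans ham hFM, rfl⟩
          rw [le_div_iff₀ (Real.rpow_pos_of_pos hapos σ)] at h14
          exact h14
        have hμC : μ * (b:ℝ)^σ ≤ ((ebd G (F \ B)).ncard : ℝ) := by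
          have hbM : (F \ B).ncard ≤ M := le_trans (by omega) hFM
          have h14 := hμlb _ ⟨F \ B, (hF.diff : (F \ B).Finite), hBCne, hbM, rfl⟩
          rw [le_div_iff₀ (Real.rpow_pos_of_pos hbpos σ)] at h14
          exact h14
        have hbern : ((a:ℝ)+(b:ℝ))^σ ≤ (b:ℝ)^σ + σ * (a:ℝ)^σ :=
          aux_bernoulli hapos (by exact_mod_cast hba) hσ0.le hσ1.le
        have habR : (a:ℝ)+(b:ℝ) = (m:ℝ) := by exact_mod_cast hab
        have heq3 : ((ebd G B).ncard : ℝ) + ((ebd G (F \ B)).ncard : ℝ)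
            = 2*((inbd G F B).ncard:ℝ) + ((ebd G F).ncard:ℝ) := by exact_mod_cast hid
        have h20 : μ * ((a:ℝ)^σ + (b:ℝ)^σ - (m:ℝ)^σ) ≤ 2*((inbd G F B).ncard:ℝ) := by
          rw [mul_sub, mul_add]
          linarith [heμ, hμB, hμC, heq3]
        have h21 : μ * ((1-σ) * (a:ℝ)^σ) ≤ μ * ((a:ℝ)^σ + (b:ℝ)^σ - (m:ℝ)^σ) := by
          apply mul_le_mul_of_nonneg_left ?_ hμnn
          rw [← habR]
          linarith [hbern]
        have h22 : β/2 * (μ * (a:ℝ)^σ) ≤ 2*((inbd G F B).ncard:ℝ) := by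
          have h15 : μ * ((1-σ)*(a:ℝ)^σ) = β/2 * (μ * (a:ℝ)^σ) := by
            rw [show (1-σ) = β/2 from h1σ]
            ring
          calc β/2 * (μ * (a:ℝ)^σ) = μ * ((1-σ) * (a:ℝ)^σ) := h15.symm
            _ ≤ μ * ((a:ℝ)^σ + (b:ℝ)^σ - (m:ℝ)^σ) := h21
            _ ≤ 2*((inbd G F B).ncard:ℝ) := h20
        have h23 : β/4 * μ * (a:ℝ)^(σ-1) ≤ ((inbd G F B).ncard:ℝ)/(a:ℝ) := by
          rw [le_div_iff₀ hapos]
          have h24 : (a:ℝ)^(σ-1) * (a:ℝ) = (a:ℝ)^σ := by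
            nth_rewrite 2 [← Real.rpow_one (a:ℝ)]
            rw [← Real.rpow_add hapos, sub_add_cancel]
          calc β/4*μ*(a:ℝ)^(σ-1) * (a:ℝ) = β/4 * (μ * ((a:ℝ)^(σ-1)*(a:ℝ))) := by ring
            _ = β/4 * (μ * (a:ℝ)^σ) := by rw [h24]
            _ ≤ ((inbd G F B).ncard:ℝ) := by linarith
        refine le_trans ?_ h23
        have h25 : (m:ℝ)^(σ-1) ≤ (a:ℝ)^(σ-1) :=
          Real.rpow_le_rpow_of_nonpos hapos (by exact_mod_cast ham) (by linarith)
        have h26 : 0 ≤ β/4 * μ := mul_nonneg (by linarith) hμnn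
        calc β/4*μ*(m:ℝ)^(σ-1) = (β/4*μ)*(m:ℝ)^(σ-1) := by ring
          _ ≤ (β/4*μ)*(a:ℝ)^(σ-1) := mul_le_mul_of_nonneg_left h25 h26
          _ = β/4*μ*(a:ℝ)^(σ-1) := by ring
    -- conclude via sep
    have hsep : (m:ℝ) * cheeger G F ≤ sep G M :=
      le_csSup (aux_sep_bddAbove hdeg hN M) ⟨F, hF, hFM, rfl⟩
    have h30 : β/4 * μ * (m:ℝ)^σ ≤ (m:ℝ) * cheeger G F := by
      have h31 : (m:ℝ) * (m:ℝ)^(σ-1) = (m:ℝ)^σ := by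
        nth_rewrite 1 [← Real.rpow_one (m:ℝ)]
        rw [← Real.rpow_add hmpos]
        congr 1
        ring
      have h32 := mul_le_mul_of_nonneg_left hch hmpos.le
      calc β/4*μ*(m:ℝ)^σ = (m:ℝ)*(β/4*μ*(m:ℝ)^(σ-1)) := by rw [← h31]; ring
        _ ≤ (m:ℝ)*cheeger G F := h32
    have h33 : β/4 * ((ebd G F).ncard:ℝ) ≤ (m:ℝ)*cheeger G F := by
      have : β/4 * ((ebd G F).ncard:ℝ) = β/4*μ*(m:ℝ)^σ := by
        rw [heμ]; ring
      linarith
    have h34 : A' * (M:ℝ)^(1-β) ≤ β/4 * ((ebd G F).ncard:ℝ) := by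
      have h35 : (c₃*(M:ℝ))^(1-β) ≤ (m:ℝ)^(1-β) :=
        Real.rpow_le_rpow (by positivity) hc₃M (by linarith)
      have h36 : (c₃*(M:ℝ))^(1-β) = c₃^(1-β) * (M:ℝ)^(1-β) :=
        Real.mul_rpow hc₃pos.le hMpos.le
      calc A' * (M:ℝ)^(1-β) = β/4 * (C₁ * (c₃^(1-β) * (M:ℝ)^(1-β))) := by
            rw [hA'def]; ring
        _ = β/4 * (C₁ * (c₃*(M:ℝ))^(1-β)) := by rw [h36]
        _ ≤ β/4 * (C₁ * (m:ℝ)^(1-β)) := by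
            apply mul_le_mul_of_nonneg_left ?_ (by linarith)
            exact mul_le_mul_of_nonneg_left h35 hC₁.le
        _ ≤ β/4 * ((ebd G F).ncard:ℝ) := mul_le_mul_of_nonneg_left heC₁ (by linarith)
    linarith
  -- final assembly
  have hn₁N₀ : N₀ ≤ n₁ := by
    have h : (N₀:ℝ) + 1 ≤ (n₁:ℝ) :=
      le_trans (le_trans (le_max_left _ _) (le_max_left _ _)) hn₁
    have h2 : (N₀:ℝ) < (n₁:ℝ) := by linarith
    have h3 : N₀ < n₁ := by exact_mod_cast h2
    exact h3.le
  constructor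
  · refine ⟨A'/C₂, div_pos hA'pos hC₂, n₁, ?_⟩
    intro n hn
    have hK := KEY n hn
    have hnN₀ : N₀ ≤ n := le_trans hn₁N₀ hn
    have hnn₀ : n₀ ≤ n := le_trans hN₀n₀ hnN₀
    have hn1R : (1:ℝ) ≤ (n:ℝ) := le_trans hN₀R (by exact_mod_cast hnN₀)
    have hnpos : (0:ℝ) < (n:ℝ) := by linarith
    have hnβ : (0:ℝ) < (n:ℝ)^β := Real.rpow_pos_of_pos hnpos β
    have hub := (hiso n hnn₀).2
    have h40 : A' * (n:ℝ)^(1-β) / (n:ℝ) = A' / (n:ℝ)^β := by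
      rw [Real.rpow_sub hnpos, Real.rpow_one]
      field_simp
    have h41 : A' / (n:ℝ)^β ≤ sep G n / (n:ℝ) := by
      rw [← h40]
      exact (div_le_div_iff_of_pos_right hnpos).2 hK
    have h42 : A'/C₂ * isop G n ≤ A'/(n:ℝ)^β := by
      calc A'/C₂ * isop G n ≤ A'/C₂ * (C₂/(n:ℝ)^β) :=
            mul_le_mul_of_nonneg_left hub (by positivity)
        _ = A'/(n:ℝ)^β := by field_simp
    linarith
  · exact ⟨A', hA'pos, n₁, KEY⟩
end

section
/- Let G be a graph of bounded degree and suppose there exist C₁, C₂ > 0 and 1 > α > β > 0 with C₁/n^α ≤ Λ(n) ≤ C₂/n^β for all n ≥ 1, and suppose G has partial self-isomorphisms. Then there exists A > 0 such that for all n ≥ 2, Sep(n) ≥ A·n^γ / log(n), where γ = β(1−α)/α. -/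
open Set Filter

open SepProfile Real

section Aux

variable {V : Type*} (G : SimpleGraph V)

/-- the set whose infimum is `isop G n` -/
def ratSet (n : ℕ) : Set ℝ :=
  {x | ∃ A : Set V, A.Finite ∧ A.Nonempty ∧ A.ncard ≤ n ∧ x = ratio G A}

lemma isop_eq_sInf (n : ℕ) : isop G n = sInf (ratSet G n) := rfl

lemma ratio_nonneg (A : Set V) : 0 ≤ ratio G A := by
  unfold ratio; positivity

lemma ratSet_bddBelow (n : ℕ) : BddBelow (ratSet G n) := by
  refine ⟨0, fun x hx => ?_⟩
  obtain ⟨A, -, -, -, rfl⟩ := hx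
  exact ratio_nonneg G A

lemma isop_nonneg (n : ℕ) : 0 ≤ isop G n :=
  Real.sInf_nonneg (fun x hx => by obtain ⟨A, -, -, -, rfl⟩ := hx; exact ratio_nonneg G A)

lemma isop_le {A : Set V} {n : ℕ} (hA : A.Finite) (hne : A.Nonempty) (hcard : A.ncard ≤ n) :
    isop G n ≤ ratio G A :=
  csInf_le (ratSet_bddBelow G n) ⟨A, hA, hne, hcard, rfl⟩

lemma ratSet_mono {m n : ℕ} (h : m ≤ n) : ratSet G m ⊆ ratSet G n := by
  rintro x ⟨A, hA, hne, hc, rfl⟩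
  exact ⟨A, hA, hne, hc.trans h, rfl⟩

lemma isop_antitone {m n : ℕ} (h : m ≤ n) (hne : (ratSet G m).Nonempty) :
    isop G n ≤ isop G m :=
  csInf_le_csInf (ratSet_bddBelow G n) hne (ratSet_mono G h)

lemma ncard_pos_of_finite_nonempty {α : Type*} {s : Set α} (hs : s.Finite) (h : s.Nonempty) :
    1 ≤ s.ncard := (Set.ncard_pos hs).mpr h

/-- Attainment of the isoperimetric infimum. -/
lemma isop_attained {n : ℕ} (hne : (ratSet G n).Nonempty) :
    ∃ A : Set V, A.Finite ∧ A.Nonempty ∧ A.ncard ≤ n ∧ ratio G A = isop G n := by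
  obtain ⟨b, hb⟩ := hne
  have hb0 : 0 ≤ b := by obtain ⟨A, -, -, -, rfl⟩ := hb; exact ratio_nonneg G A
  set T : Set ℝ := ratSet G n ∩ Set.Iic b with hT
  have hTne : T.Nonempty := ⟨b, hb, Set.mem_Iic.mpr le_rfl⟩
  have hTfin : T.Finite := by
    have : T ⊆ (fun p : ℕ × ℕ => (p.1 : ℝ) / (p.2 : ℝ)) ''
        (Set.Iic (Nat.ceil (b * n)) ×ˢ Set.Iic n) := by
      rintro x ⟨⟨A, hA, hAne, hc, rfl⟩, hxb⟩
      have hA1 : 1 ≤ A.ncard := ncard_pos_of_finite_nonempty hA hAne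
      have hApos : (0:ℝ) < A.ncard := by exact_mod_cast hA1
      refine ⟨((ebd G A).ncard, A.ncard), ⟨?_, hc⟩, rfl⟩
      simp only [Set.mem_Iic]
      have h1 : ((ebd G A).ncard : ℝ) ≤ b * A.ncard := by
        have := hxb
        rw [Set.mem_Iic, ratio, div_le_iff₀ hApos] at this
        exact this
      have h2 : ((ebd G A).ncard : ℝ) ≤ b * n := by
        refine h1.trans (by
          have : (A.ncard : ℝ) ≤ n := by exact_mod_cast hc
          nlinarith)
      exact_mod_cast h2.trans (Nat.le_ceil _)
    exact Set.Finite.subset (((Set.finite_Iic _).prod (Set.finite_Iic _)).image _) this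
  have hmem : sInf T ∈ T := hTne.csInf_mem hTfin
  have hlow : ∀ x ∈ ratSet G n, sInf T ≤ x := by
    intro x hx
    rcases le_or_gt x b with h | h
    · exact csInf_le hTfin.bddBelow ⟨hx, h⟩
    · exact le_trans (csInf_le hTfin.bddBelow ⟨hb, Set.mem_Iic.mpr le_rfl⟩) h.le
  have : sInf T = isop G n := by
    refine le_antisymm (le_csInf ⟨b, hb⟩ hlow) (csInf_le_csInf (ratSet_bddBelow G n) hTne
      (Set.inter_subset_left))
  obtain ⟨⟨A, hA, hAne, hc, hx⟩, -⟩ := hmem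
  exact ⟨A, hA, hAne, hc, by rw [← hx, this]⟩

/-- From an achiever we get an optimal set. -/
lemma exists_optimal {n : ℕ} (hn1 : (ratSet G 1).Nonempty) (h1n : 1 ≤ n) :
    ∃ F : Set V, Optimal G F ∧ F.ncard ≤ n ∧ ratio G F = isop G n := by
  have hne : (ratSet G n).Nonempty := hn1.mono (ratSet_mono G h1n)
  obtain ⟨A, hA, hAne, hc, hr⟩ := isop_attained G hne
  have h1 : isop G A.ncard ≤ ratio G A := isop_le G hA hAne le_rfl
  have h2 : isop G n ≤ isop G A.ncard :=
    isop_antitone G hc ⟨ratio G A, A, hA, hAne, le_rfl, rfl⟩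
  exact ⟨A, ⟨hA, hAne, le_antisymm (by rw [hr]; exact h2) h1⟩, hc, hr⟩

end Aux

section PSI

variable {V : Type*} (G : SimpleGraph V)

lemma mem_nbh_left {F : Set V} : F ⊆ nbh G F := Set.subset_union_left

lemma mem_nbh_of_adj {F : Set V} {a b : V} (ha : a ∈ F) (hadj : G.Adj a b) :
    b ∈ nbh G F := Or.inr ⟨a, ha, hadj⟩

lemma ebd_finite_of_isop_pos {F : Set V} (hOpt : Optimal G F) (hpos : 0 < isop G F.ncard) :
    (ebd G F).Finite := by
  by_contra h
  have : (ebd G F).ncard = 0 := Set.Infinite.ncard h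
  have : ratio G F = 0 := by rw [ratio, this]; simp
  rw [hOpt.2.2] at this
  exact absurd this (ne_of_gt hpos)

/-- The PSI copy has the same cardinality and the same boundary cardinality, and
the union has small ratio. -/
lemma psi_double (hPSI : HasPSI G) {F : Set V} (hOpt : Optimal G F)
    (hpos : 0 < isop G F.ncard) :
    ∃ F₂ : Set V, F₂.Finite ∧ F₂.Nonempty ∧ F₂.ncard = 2 * F.ncard ∧
      ratio G F₂ ≤ isop G F.ncard := by
  obtain ⟨hFfin, hFne, hFopt⟩ := hOpt
  obtain ⟨F', hF'fin, hdisj, e, he⟩ := hPSI F hFfin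
  have hbdfin : (ebd G F).Finite := ebd_finite_of_isop_pos G ⟨hFfin, hFne, hFopt⟩ hpos
  -- cardinality of F'
  have hcardF' : F'.ncard = F.ncard := by
    have hinj : Function.Injective (fun x : nbh G F => ((e x : V))) := by
      intro a b hab
      exact e.toEquiv.injective (Subtype.val_injective hab)
    have himg : (fun x : nbh G F => ((e x : V))) '' (Subtype.val ⁻¹' F) = F' := by
      apply Set.Subset.antisymm
      · rintro v ⟨x, hx, rfl⟩
        exact (he x).mp hx
      · intro v hv
        have hvnb : v ∈ nbh G F' := mem_nbh_left G hv
        refine ⟨e.symm ⟨v, hvnb⟩, ?_, ?_⟩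
        · have := (he (e.symm ⟨v, hvnb⟩)).mpr
          simp only [RelIso.apply_symm_apply] at this
          exact this hv
        · simp
    have h1 : ((fun x : nbh G F => ((e x : V))) '' (Subtype.val ⁻¹' F)).ncard
        = (Subtype.val ⁻¹' F : Set (nbh G F)).ncard :=
      Set.ncard_image_of_injective _ hinj
    have h2 : (Subtype.val '' (Subtype.val ⁻¹' F : Set (nbh G F))).ncard
        = (Subtype.val ⁻¹' F : Set (nbh G F)).ncard :=
      Set.ncard_image_of_injective _ Subtype.val_injective
    have h3 : Subtype.val '' (Subtype.val ⁻¹' F : Set (nbh G F)) = F := by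
      rw [Set.image_preimage_eq_inter_range, Subtype.range_coe]
      exact Set.inter_eq_self_of_subset_left (mem_nbh_left G)
    rw [← himg, h1, ← h2, h3]
  -- boundary bijection
  classical
  set f : V × V → V × V := fun p =>
    if h : p.1 ∈ nbh G F ∧ p.2 ∈ nbh G F then ((e ⟨p.1, h.1⟩ : V), (e ⟨p.2, h.2⟩ : V)) else p
    with hf
  have hadj_iff : ∀ (x y : nbh G F), G.Adj (e x : V) (e y : V) ↔ G.Adj (x : V) (y : V) := by
    intro x y
    exact e.map_adj_iff
  have himg : f '' ebd G F = ebd G F' := by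
    apply Set.Subset.antisymm
    · rintro q ⟨⟨a, b⟩, ⟨hadj, haF, hbF⟩, rfl⟩
      have hadj' : G.Adj a b := hadj
      have haF' : a ∈ F := haF
      have hbF' : b ∉ F := hbF
      have hcond : a ∈ nbh G F ∧ b ∈ nbh G F :=
        ⟨mem_nbh_left G haF', mem_nbh_of_adj G haF' hadj'⟩
      have hfq : f (a, b) = ((e ⟨a, hcond.1⟩ : V), (e ⟨b, hcond.2⟩ : V)) := by
        simp only [hf]; rw [dif_pos hcond]
      rw [hfq]
      refine ⟨(hadj_iff ⟨a, hcond.1⟩ ⟨b, hcond.2⟩).mpr hadj', (he ⟨a, hcond.1⟩).mp haF',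
        fun hc => hbF' ?_⟩
      exact (he ⟨b, hcond.2⟩).mpr hc
    · rintro ⟨a', b'⟩ ⟨hadj, haF', hbF'⟩
      have hadj2 : G.Adj a' b' := hadj
      have haF2 : a' ∈ F' := haF'
      have hbF2 : b' ∉ F' := hbF'
      have ha'nb : a' ∈ nbh G F' := mem_nbh_left G haF2
      have hb'nb : b' ∈ nbh G F' := mem_nbh_of_adj G haF2 hadj2
      set xa := e.symm ⟨a', ha'nb⟩ with hxa
      set xb := e.symm ⟨b', hb'nb⟩ with hxb
      have hexa : e xa = ⟨a', ha'nb⟩ := e.apply_symm_apply _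
      have hexb : e xb = ⟨b', hb'nb⟩ := e.apply_symm_apply _
      have hadjx : G.Adj (xa : V) (xb : V) := by
        rw [← hadj_iff xa xb, hexa, hexb]; exact hadj2
      have hxaF : (xa : V) ∈ F := by
        rw [he xa, hexa]; exact haF2
      have hxbF : (xb : V) ∉ F := by
        rw [he xb, hexb]; exact hbF2
      refine ⟨((xa : V), (xb : V)), ⟨hadjx, hxaF, hxbF⟩, ?_⟩
      have hcond : (xa : V) ∈ nbh G F ∧ (xb : V) ∈ nbh G F := ⟨xa.2, xb.2⟩
      have hfq : f ((xa : V), (xb : V)) = ((e xa : V), (e xb : V)) := by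
        simp only [hf]; rw [dif_pos hcond]
      rw [hfq, hexa, hexb]
  have hinjOn : Set.InjOn f (ebd G F) := by
    rintro ⟨a, b⟩ hab ⟨c, d⟩ hcd heq
    obtain ⟨hadj1, ha1, hb1⟩ := hab
    obtain ⟨hadj3, hc1, hd1⟩ := hcd
    have hconda : a ∈ nbh G F ∧ b ∈ nbh G F :=
      ⟨mem_nbh_left G ha1, mem_nbh_of_adj G ha1 hadj1⟩
    have hcondc : c ∈ nbh G F ∧ d ∈ nbh G F :=
      ⟨mem_nbh_left G hc1, mem_nbh_of_adj G hc1 hadj3⟩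
    have h1 : f (a, b) = ((e ⟨a, hconda.1⟩ : V), (e ⟨b, hconda.2⟩ : V)) := by
      simp only [hf]; rw [dif_pos hconda]
    have h2 : f (c, d) = ((e ⟨c, hcondc.1⟩ : V), (e ⟨d, hcondc.2⟩ : V)) := by
      simp only [hf]; rw [dif_pos hcondc]
    rw [h1, h2, Prod.mk.injEq] at heq
    have e1 : (⟨a, hconda.1⟩ : nbh G F) = ⟨c, hcondc.1⟩ :=
      e.toEquiv.injective (Subtype.val_injective heq.1)
    have e2 : (⟨b, hconda.2⟩ : nbh G F) = ⟨d, hcondc.2⟩ :=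
      e.toEquiv.injective (Subtype.val_injective heq.2)
    have : a = c := congrArg Subtype.val e1
    have : b = d := congrArg Subtype.val e2
    simp_all
  have hbdcard : (ebd G F').ncard = (ebd G F).ncard := by
    rw [← himg, Set.ncard_image_of_injOn hinjOn]
  -- the union
  have hunion : ebd G (F ∪ F') ⊆ ebd G F ∪ ebd G F' := by
    rintro ⟨a, b⟩ ⟨hadj, ha, hb⟩
    rcases ha with ha | ha
    · exact Or.inl ⟨hadj, ha, fun hc => hb (Or.inl hc)⟩
    · exact Or.inr ⟨hadj, ha, fun hc => hb (Or.inr hc)⟩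
  have hbd'fin : (ebd G F').Finite := by rw [← himg]; exact hbdfin.image f
  have hcard : (F ∪ F').ncard = 2 * F.ncard := by
    rw [Set.ncard_union_eq hdisj hFfin hF'fin, hcardF']; ring
  refine ⟨F ∪ F', hFfin.union hF'fin, hFne.mono Set.subset_union_left, hcard, ?_⟩
  -- ratio bound
  have hm1 : 1 ≤ F.ncard := ncard_pos_of_finite_nonempty hFfin hFne
  have hmpos : (0:ℝ) < F.ncard := by exact_mod_cast hm1
  have hnum : ((ebd G (F ∪ F')).ncard : ℝ) ≤ 2 * (ebd G F).ncard := by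
    have h1 : (ebd G (F ∪ F')).ncard ≤ (ebd G F ∪ ebd G F').ncard :=
      Set.ncard_le_ncard hunion (hbdfin.union hbd'fin)
    have h2 : (ebd G F ∪ ebd G F').ncard ≤ (ebd G F).ncard + (ebd G F').ncard :=
      Set.ncard_union_le _ _
    have h3 : (ebd G (F ∪ F')).ncard ≤ 2 * (ebd G F).ncard := by omega
    exact_mod_cast h3
  have key : ratio G (F ∪ F') ≤ ratio G F := by
    have hden : (0:ℝ) < ((F ∪ F').ncard : ℝ) := by
      rw [hcard]; exact_mod_cast (by omega : 0 < 2 * F.ncard)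
    rw [ratio, ratio, div_le_div_iff₀ hden hmpos]
    have hc2 : ((F ∪ F').ncard : ℝ) = 2 * (F.ncard : ℝ) := by rw [hcard]; push_cast; ring
    rw [hc2]
    nlinarith [hnum, hmpos]
  exact hFopt ▸ key

end PSI
section Scale

variable {V : Type*} (G : SimpleGraph V)

/-- Between m and 2m there is an optimal integer. -/
lemma optimal_step (hPSI : HasPSI G) (hn1 : (ratSet G 1).Nonempty)
    (hpos : ∀ m : ℕ, 1 ≤ m → 0 < isop G m) {F : Set V} (hOpt : Optimal G F) :
    ∃ F₂ : Set V, Optimal G F₂ ∧ F.ncard < F₂.ncard ∧ F₂.ncard ≤ 2 * F.ncard := by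
  set m := F.ncard with hm
  have hm1 : 1 ≤ m := ncard_pos_of_finite_nonempty hOpt.1 hOpt.2.1
  obtain ⟨F₂, hF₂fin, hF₂ne, hF₂card, hF₂ratio⟩ :=
    psi_double G hPSI hOpt (hpos m hm1)
  obtain ⟨B, hBopt, hBcard, hBratio⟩ := exists_optimal G hn1 (by omega : 1 ≤ 2 * m)
  rcases lt_or_ge m B.ncard with h | h
  · exact ⟨B, hBopt, h, hBcard⟩
  · -- isop (2m) = isop m, so F₂ is optimal
    have h1 : isop G (2 * m) ≤ isop G m :=
      isop_antitone G (by omega) (hn1.mono (ratSet_mono G hm1))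
    have h2 : isop G m ≤ isop G B.ncard :=
      isop_antitone G h ⟨ratio G B, B, hBopt.1, hBopt.2.1, le_rfl, rfl⟩
    have h3 : isop G B.ncard = isop G (2 * m) := by
      rw [← hBopt.2.2, hBratio]
    have heq : isop G (2 * m) = isop G m := le_antisymm h1 (by
      calc isop G m ≤ isop G B.ncard := h2
        _ = isop G (2 * m) := h3)
    have h4 : isop G (2 * m) ≤ ratio G F₂ := by
      have := isop_le G hF₂fin hF₂ne (le_of_eq hF₂card)
      exact this
    have h5 : ratio G F₂ = isop G F₂.ncard := by
      rw [hF₂card, heq]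
      exact le_antisymm (hF₂ratio) (by rw [← heq]; exact h4)
    exact ⟨F₂, ⟨hF₂fin, hF₂ne, h5⟩, by omega, by omega⟩

/-- Optimal sets exist at every scale: in [s, 2s). -/
lemma exists_optimal_scale (hPSI : HasPSI G) (hn1 : (ratSet G 1).Nonempty)
    (hpos : ∀ m : ℕ, 1 ≤ m → 0 < isop G m) (s : ℕ) (hs : 1 ≤ s) :
    ∃ F : Set V, Optimal G F ∧ s ≤ F.ncard ∧ F.ncard < 2 * s := by
  obtain ⟨F₀, hF₀, hF₀card, -⟩ := exists_optimal G hn1 le_rfl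
  have hF₀1 : F₀.ncard = 1 :=
    le_antisymm hF₀card (ncard_pos_of_finite_nonempty hF₀.1 hF₀.2.1)
  -- induction on the gap
  suffices H : ∀ j : ℕ, ∀ F : Set V, Optimal G F → F.ncard < s → s ≤ F.ncard + j →
      ∃ F' : Set V, Optimal G F' ∧ s ≤ F'.ncard ∧ F'.ncard < 2 * s by
    rcases lt_or_ge F₀.ncard s with h | h
    · exact H s F₀ hF₀ h (by omega)
    · exact ⟨F₀, hF₀, h, by omega⟩
  intro j
  induction j with
  | zero => intro F hF h1 h2; omega
  | succ j ih =>
    intro F hF h1 h2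
    obtain ⟨F₂, hF₂, hlt, hle⟩ := optimal_step G hPSI hn1 hpos hF
    rcases lt_or_ge F₂.ncard s with h | h
    · exact ih F₂ hF₂ h (by omega)
    · exact ⟨F₂, hF₂, h, by omega⟩

end Scale
section Cheeger

variable {V : Type*} (G : SimpleGraph V)

def chSet (F : Set V) : Set ℝ :=
  {x | ∃ A : Set V, A ⊆ F ∧ A.Nonempty ∧ 2 * A.ncard ≤ F.ncard ∧
    x = ((inbd G F A).ncard : ℝ) / (A.ncard : ℝ)}

lemma cheeger_eq_sInf (F : Set V) : cheeger G F = sInf (chSet G F) := rfl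

lemma chSet_nonneg {F : Set V} : ∀ x ∈ chSet G F, 0 ≤ x := by
  rintro x ⟨A, -, -, -, rfl⟩; positivity

lemma cheeger_nonneg (F : Set V) : 0 ≤ cheeger G F :=
  Real.sInf_nonneg (chSet_nonneg G)

lemma inbd_subset (F A : Set V) : inbd G F A ⊆ A ×ˢ F := by
  rintro ⟨a, b⟩ ⟨-, ha, hb⟩; exact ⟨ha, hb.1⟩

lemma inbd_finite {F : Set V} (hF : F.Finite) (A : Set V) (hA : A ⊆ F) :
    (inbd G F A).Finite :=
  Set.Finite.subset ((hF.subset hA).prod hF) (inbd_subset G F A)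

lemma cheeger_le_card {F : Set V} (hF : F.Finite) : cheeger G F ≤ (F.ncard : ℝ) ^ 2 := by
  rcases Set.eq_empty_or_nonempty (chSet G F) with h | h
  · rw [cheeger_eq_sInf, h, Real.sInf_empty]; positivity
  · obtain ⟨x, hx⟩ := h
    refine le_trans (csInf_le ⟨0, fun y hy => chSet_nonneg G y hy⟩ hx) ?_
    obtain ⟨A, hAF, hAne, -, rfl⟩ := hx
    have hA1 : 1 ≤ A.ncard := ncard_pos_of_finite_nonempty (hF.subset hAF) hAne
    have h1 : ((inbd G F A).ncard : ℝ) ≤ (F.ncard : ℝ) ^ 2 := by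
      have := Set.ncard_le_ncard (inbd_subset G F A) ((hF.subset hAF).prod hF)
      have h2 : (A ×ˢ F).ncard ≤ F.ncard * F.ncard := by
        have hsub : A ×ˢ F ⊆ F ×ˢ F := Set.prod_mono hAF Set.Subset.rfl
        have hpf : (F ×ˢ F).Finite := hF.prod hF
        refine le_trans (Set.ncard_le_ncard hsub hpf) (le_of_eq ?_)
        have := hF.fintype
        rw [Set.ncard_eq_toFinset_card' (F ×ˢ F), Set.toFinset_prod, Finset.card_product,
          Set.ncard_eq_toFinset_card' F]
      have : (inbd G F A).ncard ≤ F.ncard * F.ncard := le_trans this h2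
      calc ((inbd G F A).ncard : ℝ) ≤ (F.ncard * F.ncard : ℕ) := by exact_mod_cast this
        _ = (F.ncard : ℝ) ^ 2 := by push_cast; ring
    calc ((inbd G F A).ncard : ℝ) / (A.ncard : ℝ) ≤ ((inbd G F A).ncard : ℝ) := by
          apply div_le_self (by positivity) (by exact_mod_cast hA1)
      _ ≤ _ := h1

lemma sep_bddAbove (n : ℕ) :
    BddAbove {x | ∃ F : Set V, F.Finite ∧ F.ncard ≤ n ∧ x = (F.ncard : ℝ) * cheeger G F} := by
  refine ⟨(n : ℝ) * (n : ℝ) ^ 2, ?_⟩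
  rintro x ⟨F, hF, hc, rfl⟩
  have h1 : (F.ncard : ℝ) ≤ n := by exact_mod_cast hc
  have h2 : cheeger G F ≤ (F.ncard : ℝ) ^ 2 := cheeger_le_card G hF
  have h3 : (F.ncard : ℝ) ^ 2 ≤ (n : ℝ) ^ 2 := by
    apply pow_le_pow_left₀ (by positivity) h1
  have := cheeger_nonneg G F
  nlinarith

lemma le_sep {n : ℕ} {F : Set V} (hF : F.Finite) (hc : F.ncard ≤ n) :
    (F.ncard : ℝ) * cheeger G F ≤ sep G n :=
  le_csSup (sep_bddAbove G n) ⟨F, hF, hc, rfl⟩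

end Cheeger

section Cut

variable {V : Type*} (G : SimpleGraph V)

lemma ebd_subset_split_left {F A : Set V} (hA : A ⊆ F) :
    ebd G A ⊆ (ebd G F ∩ {p | p.1 ∈ A}) ∪ inbd G F A := by
  rintro ⟨a, b⟩ ⟨hadj, ha, hb⟩
  by_cases hbF : b ∈ F
  · exact Or.inr ⟨hadj, ha, hbF, hb⟩
  · exact Or.inl ⟨⟨hadj, hA ha, hbF⟩, ha⟩

lemma ebd_subset_split_right {F A : Set V} :
    ebd G (F \ A) ⊆ (ebd G F ∩ {p | p.1 ∉ A}) ∪ Prod.swap '' inbd G F A := by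
  rintro ⟨u, v⟩ ⟨hadj, hu, hv⟩
  by_cases hvF : v ∈ F
  · have hvA : v ∈ A := by
      by_contra hc; exact hv ⟨hvF, hc⟩
    exact Or.inr ⟨(v, u), ⟨hadj.symm, hvA, hu.1, hu.2⟩, rfl⟩
  · exact Or.inl ⟨⟨hadj, hu.1, hvF⟩, hu.2⟩

/-- Splitting F into A and F \ A at cost `inbd G F A`. -/
lemma split_count {F A : Set V} (hF : F.Finite) (hA : A ⊆ F)
    (hbd : (ebd G F).Finite) :
    ((ebd G A).ncard : ℝ) + ((ebd G (F \ A)).ncard : ℝ)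
      ≤ ((ebd G F).ncard : ℝ) + 2 * ((inbd G F A).ncard : ℝ) := by
  classical
  set Y₁ := ebd G F ∩ {p | p.1 ∈ A} with hY₁
  set Y₂ := ebd G F ∩ {p | p.1 ∉ A} with hY₂
  have hIfin : (inbd G F A).Finite := inbd_finite G hF A hA
  have h1 : (ebd G A).ncard ≤ Y₁.ncard + (inbd G F A).ncard := by
    refine le_trans (Set.ncard_le_ncard (ebd_subset_split_left G hA)
      (((hbd.subset Set.inter_subset_left)).union hIfin)) (Set.ncard_union_le _ _)
  have h2 : (ebd G (F \ A)).ncard ≤ Y₂.ncard + (inbd G F A).ncard := by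
    have h21 := Set.ncard_le_ncard (ebd_subset_split_right G (F := F) (A := A))
      (((hbd.subset Set.inter_subset_left)).union (hIfin.image _))
    have h22 := Set.ncard_union_le Y₂ (Prod.swap '' inbd G F A)
    rw [Set.ncard_image_of_injective _ Prod.swap_injective] at h22
    rw [← hY₂] at h21
    omega
  have h3 : Y₁.ncard + Y₂.ncard = (ebd G F).ncard := by
    rw [← Set.ncard_union_eq ?_ (hbd.subset Set.inter_subset_left)
      (hbd.subset Set.inter_subset_left)]
    · congr 1
      ext p
      constructor
      · rintro (h | h) <;> exact h.1
      · intro h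
        by_cases hp : p.1 ∈ A
        · exact Or.inl ⟨h, hp⟩
        · exact Or.inr ⟨h, hp⟩
    · rw [Set.disjoint_iff_forall_ne]
      rintro p ⟨-, hp⟩ q ⟨-, hq⟩ rfl
      exact hq hp
  have := h1; have := h2
  have hc : ((ebd G A).ncard : ℝ) ≤ (Y₁.ncard : ℝ) + ((inbd G F A).ncard : ℝ) := by
    exact_mod_cast h1
  have hc2 : ((ebd G (F \ A)).ncard : ℝ) ≤ (Y₂.ncard : ℝ) + ((inbd G F A).ncard : ℝ) := by
    exact_mod_cast h2
  have hc3 : (Y₁.ncard : ℝ) + (Y₂.ncard : ℝ) = ((ebd G F).ncard : ℝ) := by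
    exact_mod_cast h3
  linarith

/-- The recursive bisection lemma. -/
lemma cut2 (t : ℝ) (ht : 0 ≤ t) (n : ℕ) (hn : 1 ≤ n) (lam : ℝ)
    (hlow : ∀ P : Set V, P.Finite → P.Nonempty → P.ncard ≤ n →
      lam * P.ncard ≤ ((ebd G P).ncard : ℝ)) :
    ∀ N : ℕ, ∀ F : Set V, F.ncard ≤ N → F.Finite → F.Nonempty → (ebd G F).Finite →
    (∃ F' : Set V, F' ⊆ F ∧ F'.Nonempty ∧ n < F'.ncard ∧ t ≤ cheeger G F')
    ∨ (lam * F.ncard ≤ ((ebd G F).ncard : ℝ)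
        + 2 * t * F.ncard * (Nat.clog 2 F.ncard : ℝ)) := by
  intro N
  induction N with
  | zero =>
    intro F hN hfin hne hbd
    have := ncard_pos_of_finite_nonempty hfin hne; omega
  | succ N ih =>
    intro F hN hfin hne hbd
    rcases le_or_gt F.ncard n with hle | hgt
    · refine Or.inr (le_trans (hlow F hfin hne hle) ?_)
      have h0 : 0 ≤ 2 * t * F.ncard * (Nat.clog 2 F.ncard : ℝ) := by positivity
      linarith
    rcases le_or_gt t (cheeger G F) with hch | hch
    · exact Or.inl ⟨F, Set.Subset.rfl, hne, hgt, hch⟩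
    -- find a cheap cut
    obtain ⟨a₀, ha₀⟩ := hne
    have hsingle : ((inbd G F {a₀}).ncard : ℝ) / (({a₀} : Set V).ncard : ℝ) ∈ chSet G F := by
      refine ⟨{a₀}, Set.singleton_subset_iff.mpr ha₀, Set.singleton_nonempty a₀, ?_, rfl⟩
      rw [Set.ncard_singleton]; omega
    obtain ⟨x, hx, hxt⟩ := exists_lt_of_csInf_lt ⟨_, hsingle⟩ hch
    obtain ⟨A, hAF, hAne, hAhalf, rfl⟩ := hx
    have hAfin : A.Finite := hfin.subset hAF
    have hA1 : 1 ≤ A.ncard := ncard_pos_of_finite_nonempty hAfin hAne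
    have hApos : (0:ℝ) < A.ncard := by exact_mod_cast hA1
    have hinbd_lt : ((inbd G F A).ncard : ℝ) < t * A.ncard := by
      rw [div_lt_iff₀ hApos] at hxt; linarith
    have hIfin : (inbd G F A).Finite := inbd_finite G hfin A hAF
    have hAcard_le : A.ncard ≤ F.ncard := Set.ncard_le_ncard hAF hfin
    have hFA_card : (F \ A).ncard = F.ncard - A.ncard := Set.ncard_diff hAF hAfin
    have hFAfin : (F \ A).Finite := hfin.diff
    have hFAne : (F \ A).Nonempty := by
      rw [← Set.ncard_pos hFAfin]; omega
    have hbdA : (ebd G A).Finite :=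
      Set.Finite.subset ((hbd.subset Set.inter_subset_left).union hIfin)
        (ebd_subset_split_left G hAF)
    have hbdFA : (ebd G (F \ A)).Finite :=
      Set.Finite.subset ((hbd.subset Set.inter_subset_left).union (hIfin.image _))
        (ebd_subset_split_right G)
    -- recurse on both halves
    rcases ih A (by omega) hAfin hAne hbdA with hL | hRA
    · obtain ⟨F', hsub, h2, h3, h4⟩ := hL
      exact Or.inl ⟨F', hsub.trans hAF, h2, h3, h4⟩
    rcases ih (F \ A) (by omega) hFAfin hFAne hbdFA with hL | hRFA
    · obtain ⟨F', hsub, h2, h3, h4⟩ := hL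
      exact Or.inl ⟨F', hsub.trans Set.diff_subset, h2, h3, h4⟩
    refine Or.inr ?_
    -- combine the two estimates
    have hF2 : 2 ≤ F.ncard := by omega
    have hclogF : 1 ≤ Nat.clog 2 F.ncard := Nat.clog_pos one_lt_two hF2
    have hclogA : Nat.clog 2 A.ncard + 1 ≤ Nat.clog 2 F.ncard := by
      have h1 : F.ncard ≤ 2 ^ Nat.clog 2 F.ncard := Nat.le_pow_clog one_lt_two _
      have h2 : 2 ^ Nat.clog 2 F.ncard = 2 * 2 ^ (Nat.clog 2 F.ncard - 1) := by
        rw [← pow_succ']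
        congr 1
        omega
      have h3 : A.ncard ≤ 2 ^ (Nat.clog 2 F.ncard - 1) := by omega
      have h4 : Nat.clog 2 A.ncard ≤ Nat.clog 2 F.ncard - 1 :=
        (Nat.clog_le_iff_le_pow one_lt_two).mpr h3
      omega
    have hclogFA : Nat.clog 2 (F \ A).ncard ≤ Nat.clog 2 F.ncard :=
      Nat.clog_mono_right 2 (by omega)
    have hcomb : A.ncard * (1 + Nat.clog 2 A.ncard)
        + (F \ A).ncard * Nat.clog 2 (F \ A).ncard
        ≤ F.ncard * Nat.clog 2 F.ncard := by
      calc A.ncard * (1 + Nat.clog 2 A.ncard) + (F \ A).ncard * Nat.clog 2 (F \ A).ncard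
          ≤ A.ncard * Nat.clog 2 F.ncard + (F \ A).ncard * Nat.clog 2 F.ncard := by
            gcongr <;> omega
        _ = (A.ncard + (F \ A).ncard) * Nat.clog 2 F.ncard := by ring
        _ = F.ncard * Nat.clog 2 F.ncard := by rw [hFA_card]; congr 1; omega
    have hsplit := split_count G hfin hAF hbd
    -- cast everything to ℝ
    have hcast : ((F \ A).ncard : ℝ) = (F.ncard : ℝ) - (A.ncard : ℝ) := by
      rw [hFA_card]; push_cast [Nat.cast_sub hAcard_le]; ring
    have hcombR : (A.ncard : ℝ) * (1 + (Nat.clog 2 A.ncard : ℝ))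
        + ((F \ A).ncard : ℝ) * (Nat.clog 2 (F \ A).ncard : ℝ)
        ≤ (F.ncard : ℝ) * (Nat.clog 2 F.ncard : ℝ) := by exact_mod_cast hcomb
    have e1 : lam * (F.ncard:ℝ) = lam * (A.ncard:ℝ) + lam * ((F \ A).ncard:ℝ) := by
      rw [hcast]; ring
    have H := mul_le_mul_of_nonneg_left hcombR (by linarith : (0:ℝ) ≤ 2 * t)
    linarith [hRA, hRFA, hsplit, hinbd_lt, e1, H]

end Cut
section Fallback

variable {V : Type*} (G : SimpleGraph V)

lemma sep_ge_two {v w : V} (hadj : G.Adj v w) {k : ℕ} (hk : 2 ≤ k) :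
    (2:ℝ) ≤ sep G k := by
  have hvw : v ≠ w := hadj.ne
  set F : Set V := {v, w} with hFdef
  have hFfin : F.Finite := (Set.finite_singleton w).insert v
  have hFcard : F.ncard = 2 := Set.ncard_pair hvw
  have hvF : v ∈ F := Or.inl rfl
  have hwF : w ∈ F := Or.inr rfl
  have hch : (1:ℝ) ≤ cheeger G F := by
    rw [cheeger_eq_sInf]
    apply le_csInf
    · refine ⟨_, {v}, Set.singleton_subset_iff.mpr hvF, Set.singleton_nonempty v, ?_, rfl⟩
      rw [Set.ncard_singleton, hFcard]
    · rintro x ⟨A, hAF, hAne, hA2, rfl⟩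
      have hAfin : A.Finite := hFfin.subset hAF
      have hA1 : A.ncard = 1 := by
        have := ncard_pos_of_finite_nonempty hAfin hAne
        rw [hFcard] at hA2; omega
      obtain ⟨u, rfl⟩ := Set.ncard_eq_one.mp hA1
      have hu : u ∈ F := hAF rfl
      have hne : (inbd G F ({u} : Set V)).Nonempty := by
        rcases hu with rfl | hu
        · exact ⟨(u, w), hadj, rfl, hwF, fun hc => hvw (by simpa using hc.symm)⟩
        · rw [Set.mem_singleton_iff] at hu; subst hu
          exact ⟨(u, v), hadj.symm, rfl, hvF, fun hc => hvw (by simpa using hc)⟩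
      have h1 : 1 ≤ (inbd G F ({u} : Set V)).ncard :=
        ncard_pos_of_finite_nonempty
          (inbd_finite G hFfin _ (Set.singleton_subset_iff.mpr (hAF rfl))) hne
      rw [Set.ncard_singleton]
      have : (1:ℝ) ≤ ((inbd G F ({u} : Set V)).ncard : ℝ) := by exact_mod_cast h1
      simpa using this
  have hsep := le_sep G hFfin (by omega : F.ncard ≤ k)
  rw [hFcard] at hsep
  push_cast at hsep
  nlinarith [hsep, hch]

end Fallback

set_option maxHeartbeats 1000000 in
theorem stmt10 {V : Type*} (G : SimpleGraph V) (D : ℕ) (hdeg : DegLE G D)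
    (hPSI : HasPSI G)
    (C₁ C₂ α β : ℝ) (hC₁ : 0 < C₁) (hC₂ : 0 < C₂)
    (hβ : 0 < β) (hβα : β < α) (hα : α < 1)
    (hiso : ∀ n : ℕ, 1 ≤ n →
      C₁ / (n : ℝ) ^ α ≤ isop G n ∧ isop G n ≤ C₂ / (n : ℝ) ^ β) :
    ∃ A > (0:ℝ), ∀ n : ℕ, 2 ≤ n →
      A * (n : ℝ) ^ (β * (1 - α) / α) / Real.log n ≤ sep G n := by
  have hα0 : 0 < α := hβ.trans hβα
  have h1α : 0 < 1 - α := by linarith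
  have h1β : 0 < 1 - β := by linarith
  set γ := β * (1 - α) / α with hγdef
  have hγpos : 0 < γ := by positivity
  have hγ1 : γ ≤ 1 := by
    rw [hγdef, div_le_one hα0]; nlinarith
  -- positivity of isop
  have hpos : ∀ m : ℕ, 1 ≤ m → 0 < isop G m := by
    intro m hm
    have hm' : (0:ℝ) < (m:ℝ) := by exact_mod_cast Nat.lt_of_lt_of_le Nat.zero_lt_one hm
    have h : (0:ℝ) < C₁ / (m:ℝ) ^ α := by positivity
    exact lt_of_lt_of_le h (hiso m hm).1
  -- nonemptiness
  have hn1 : (ratSet G 1).Nonempty := by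
    by_contra h
    rw [Set.not_nonempty_iff_eq_empty] at h
    have h0 : isop G 1 = 0 := by rw [isop_eq_sInf, h, Real.sInf_empty]
    exact absurd h0 (ne_of_gt (hpos 1 le_rfl))
  -- an edge exists
  obtain ⟨A₀, hA₀fin, hA₀ne, hA₀c, hA₀r⟩ := isop_attained G hn1
  have hA₀pos : 0 < ratio G A₀ := hA₀r ▸ hpos 1 le_rfl
  have hbdne : (ebd G A₀).Nonempty := by
    by_contra h
    rw [Set.not_nonempty_iff_eq_empty] at h
    rw [ratio, h] at hA₀pos; simp at hA₀pos
  obtain ⟨⟨v, w⟩, hvw⟩ := hbdne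
  have hadj : G.Adj v w := hvw.1
  -- constants
  set c₇ := (C₁ / (2 * C₂)) ^ (1 / α) with hc₇
  have hc₇pos : 0 < c₇ := by positivity
  set M₁ := max 2 ((2 / c₇) ^ (α / β)) with hM₁
  have hM₁2 : (2:ℝ) ≤ M₁ := le_max_left _ _
  have hM₁pos : (0:ℝ) < M₁ := by linarith
  set c₉ := C₁ * (c₇ / 2) ^ (1 - α) * Real.log 2 / 32 with hc₉
  have hlog2 : 0 < Real.log 2 := Real.log_pos (by norm_num)
  have hc₉pos : 0 < c₉ := by positivity
  have h2M₁γ : (0:ℝ) < (2 * M₁) ^ γ := Real.rpow_pos_of_pos (by linarith) γ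
  refine ⟨min (2 * Real.log 2 / (2 * M₁) ^ γ) c₉,
    lt_min (by positivity) hc₉pos, ?_⟩
  set A := min (2 * Real.log 2 / (2 * M₁) ^ γ) c₉ with hA
  intro k hk
  have hk1R : (1:ℝ) < (k:ℝ) := by exact_mod_cast hk
  have hlogk : Real.log 2 ≤ Real.log k := Real.log_le_log (by norm_num) (by exact_mod_cast hk)
  have hlogkpos : 0 < Real.log k := lt_of_lt_of_le hlog2 hlogk
  have hkγpos : (0:ℝ) ≤ (k:ℝ) ^ γ := Real.rpow_nonneg (by positivity) γ
  rcases lt_or_ge (k:ℝ) (2 * M₁) with hsmall | hbig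
  · -- small case
    have hsep := sep_ge_two G hadj hk
    have hkγ : (k:ℝ) ^ γ ≤ (2 * M₁) ^ γ :=
      Real.rpow_le_rpow (by positivity) hsmall.le hγpos.le
    have hA1 : A ≤ 2 * Real.log 2 / (2 * M₁) ^ γ := min_le_left _ _
    have hbound : A * (k:ℝ) ^ γ / Real.log k ≤ 2 := by
      rw [div_le_iff₀ hlogkpos]
      calc A * (k:ℝ) ^ γ ≤ 2 * Real.log 2 / (2 * M₁) ^ γ * (2 * M₁) ^ γ := by
            apply mul_le_mul hA1 hkγ hkγpos (by positivity)
        _ = 2 * Real.log 2 := by field_simp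
        _ ≤ 2 * Real.log k := by linarith [hlogk]
    linarith
  · -- main case
    set s := (k + 1) / 2 with hs
    have hs1 : 1 ≤ s := by omega
    obtain ⟨F, hOpt, hsM, hM2s⟩ := exists_optimal_scale G hPSI hn1 hpos s hs1
    set M := F.ncard with hMdef
    have hM1 : 1 ≤ M := ncard_pos_of_finite_nonempty hOpt.1 hOpt.2.1
    have hMk : M ≤ k := by omega
    have hMkR : (M:ℝ) ≤ (k:ℝ) := by exact_mod_cast hMk
    have hkM : (k:ℝ) ≤ 2 * (M:ℝ) := by
      have h : k ≤ 2 * M := by omega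
      exact_mod_cast h
    have hM1R : M₁ ≤ (M:ℝ) := by linarith
    have hM2R : (2:ℝ) ≤ (M:ℝ) := le_trans hM₁2 hM1R
    have hMpos : (0:ℝ) < (M:ℝ) := by linarith
    have hM2 : 2 ≤ M := by exact_mod_cast hM2R
    -- the small scale n
    set x := c₇ * (M:ℝ) ^ (β / α) with hxdef
    have hxpos : 0 < x := by positivity
    have hx2 : (2:ℝ) ≤ x := by
      have hT : (2 / c₇) ^ (α / β) ≤ (M:ℝ) := le_trans (le_max_right _ _) hM1R
      have h1 : ((2 / c₇) ^ (α / β)) ^ (β / α) ≤ (M:ℝ) ^ (β / α) :=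
        Real.rpow_le_rpow (by positivity) hT (by positivity)
      have h2 : ((2 / c₇) ^ (α / β)) ^ (β / α) = 2 / c₇ := by
        rw [← Real.rpow_mul (by positivity)]
        have : α / β * (β / α) = 1 := by field_simp
        rw [this, Real.rpow_one]
      rw [h2] at h1
      rw [hxdef]
      calc (2:ℝ) = c₇ * (2 / c₇) := by field_simp
        _ ≤ c₇ * (M:ℝ) ^ (β / α) := by
            exact mul_le_mul_of_nonneg_left h1 hc₇pos.le
    set n := Nat.floor x with hn
    have hn2 : 2 ≤ n := by
      rw [hn]
      exact_mod_cast Nat.le_floor (by exact_mod_cast hx2)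
    have hn1' : 1 ≤ n := by omega
    have hnx : (n:ℝ) ≤ x := Nat.floor_le hxpos.le
    have hnlow : x / 2 ≤ (n:ℝ) := by
      have h := Nat.sub_one_lt_floor x
      have : x - 1 < (n:ℝ) := by exact_mod_cast h
      linarith
    have hnRpos : (0:ℝ) < (n:ℝ) := by
      have : (0:ℕ) < n := by omega
      exact_mod_cast this
    have hnα : (0:ℝ) < (n:ℝ) ^ α := Real.rpow_pos_of_pos hnRpos α
    set lam := C₁ / (n:ℝ) ^ α with hlam
    have hlampos : 0 < lam := by positivity
    -- hlow for cut2
    have hlow : ∀ P : Set V, P.Finite → P.Nonempty → P.ncard ≤ n →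
        lam * P.ncard ≤ ((ebd G P).ncard : ℝ) := by
      intro P hPfin hPne hPn
      have hP1 : 1 ≤ P.ncard := ncard_pos_of_finite_nonempty hPfin hPne
      have hPpos : (0:ℝ) < (P.ncard:ℝ) := by exact_mod_cast hP1
      have hPα : (0:ℝ) < (P.ncard:ℝ) ^ α := Real.rpow_pos_of_pos hPpos α
      have h1 : (P.ncard:ℝ) ^ α ≤ (n:ℝ) ^ α :=
        Real.rpow_le_rpow (by positivity) (by exact_mod_cast hPn) hα0.le
      have h2 : lam ≤ C₁ / (P.ncard:ℝ) ^ α := by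
        rw [hlam]
        apply div_le_div_of_nonneg_left hC₁.le hPα h1
      have h3 : C₁ / (P.ncard:ℝ) ^ α ≤ isop G P.ncard := (hiso P.ncard hP1).1
      have h4 : isop G P.ncard ≤ ratio G P := isop_le G hPfin hPne le_rfl
      have h5 : lam ≤ ((ebd G P).ncard : ℝ) / (P.ncard:ℝ) := by
        rw [ratio] at h4; linarith
      rw [le_div_iff₀ hPpos] at h5
      linarith [h5]
    -- L and t
    set L := (Nat.clog 2 M : ℝ) with hL
    have hclog1 : 1 ≤ Nat.clog 2 M := Nat.clog_pos one_lt_two hM2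
    have hL1 : (1:ℝ) ≤ L := by rw [hL]; exact_mod_cast hclog1
    have hLpos : 0 < L := by linarith
    set t := lam / (8 * L) with htdef
    have htpos : 0 < t := by positivity
    -- boundary of F is finite and bounded
    have hebdFfin : (ebd G F).Finite := ebd_finite_of_isop_pos G hOpt (hpos M hM1)
    have hebdF : ((ebd G F).ncard : ℝ) ≤ C₂ * (M:ℝ) ^ (1 - β) := by
      have h1 : ratio G F ≤ C₂ / (M:ℝ) ^ β := by
        rw [hOpt.2.2]; exact (hiso M hM1).2
      rw [ratio] at h1
      have hMβ : (0:ℝ) < (M:ℝ) ^ β := Real.rpow_pos_of_pos hMpos β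
      rw [div_le_div_iff₀ hMpos hMβ] at h1
      have h2 : (M:ℝ) ^ (1 - β) = (M:ℝ) / (M:ℝ) ^ β := by
        rw [Real.rpow_sub hMpos, Real.rpow_one]
      rw [h2, ← mul_div_assoc, le_div_iff₀ hMβ]
      exact h1
    -- the key inequality C₂ M^{1-β} ≤ lam M / 2
    have hkey : C₂ * (M:ℝ) ^ (1 - β) ≤ lam * (M:ℝ) / 2 := by
      have h1 : (n:ℝ) ^ α ≤ C₁ / (2 * C₂) * (M:ℝ) ^ β := by
        calc (n:ℝ) ^ α ≤ x ^ α := Real.rpow_le_rpow (by positivity) hnx hα0.le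
          _ = C₁ / (2 * C₂) * (M:ℝ) ^ β := by
              rw [hxdef, Real.mul_rpow (by positivity) (by positivity), hc₇,
                ← Real.rpow_mul (by positivity), ← Real.rpow_mul (by positivity),
                one_div_mul_cancel (ne_of_gt hα0), Real.rpow_one,
                div_mul_cancel₀ β (ne_of_gt hα0)]
      have hMβ : (0:ℝ) < (M:ℝ) ^ β := Real.rpow_pos_of_pos hMpos β
      have e2 : (M:ℝ) ^ (1 - β) = (M:ℝ) / (M:ℝ) ^ β := by
        rw [Real.rpow_sub hMpos, Real.rpow_one]
      have lhs_eq : C₂ * (M:ℝ) ^ (1 - β) = C₂ * (M:ℝ) / (M:ℝ) ^ β := by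
        rw [e2]; ring
      have rhs_eq : lam * (M:ℝ) / 2 = C₁ * (M:ℝ) / (2 * (n:ℝ) ^ α) := by
        rw [hlam]; field_simp
      rw [lhs_eq, rhs_eq, div_le_div_iff₀ hMβ (by positivity)]
      -- C₂ M (2 n^α) ≤ C₁ M M^β
      have h3 : 2 * C₂ * (n:ℝ) ^ α ≤ C₁ * (M:ℝ) ^ β := by
        have := mul_le_mul_of_nonneg_left h1 (by positivity : (0:ℝ) ≤ 2 * C₂)
        calc 2 * C₂ * (n:ℝ) ^ α ≤ 2 * C₂ * (C₁ / (2 * C₂) * (M:ℝ) ^ β) := this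
          _ = C₁ * (M:ℝ) ^ β := by field_simp
      calc C₂ * (M:ℝ) * (2 * (n:ℝ) ^ α) = 2 * C₂ * (n:ℝ) ^ α * (M:ℝ) := by ring
        _ ≤ C₁ * (M:ℝ) ^ β * (M:ℝ) := mul_le_mul_of_nonneg_right h3 hMpos.le
        _ = C₁ * (M:ℝ) * (M:ℝ) ^ β := by ring
    -- run the bisection lemma
    rcases cut2 G t htpos.le n hn1' lam hlow M F le_rfl hOpt.1 hOpt.2.1 hebdFfin
      with ⟨F', hF'sub, hF'ne, hF'big, hF'ch⟩ | hbad
    · -- good case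
      have hF'fin : F'.Finite := hOpt.1.subset hF'sub
      have hF'card : F'.ncard ≤ M := Set.ncard_le_ncard hF'sub hOpt.1
      have hF'k : F'.ncard ≤ k := le_trans hF'card hMk
      have hsep := le_sep G hF'fin hF'k
      have hnF' : (n:ℝ) ≤ (F'.ncard:ℝ) := by exact_mod_cast hF'big.le
      have hlow2 : (n:ℝ) * t ≤ (F'.ncard : ℝ) * cheeger G F' :=
        mul_le_mul hnF' hF'ch htpos.le (by positivity)
      have hfinal : (n:ℝ) * t ≤ sep G k := le_trans hlow2 hsep
      -- n * t = C₁ n^{1-α} / (8L)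
      have hnt : (n:ℝ) * t = C₁ * (n:ℝ) ^ (1 - α) / (8 * L) := by
        rw [htdef, hlam]
        have e : (n:ℝ) ^ (1 - α) = (n:ℝ) / (n:ℝ) ^ α := by
          rw [Real.rpow_sub hnRpos, Real.rpow_one]
        rw [e]
        field_simp
      -- bound on L
      have hLbound : L * Real.log 2 ≤ 2 * Real.log k := by
        have h1 : (2:ℕ) ^ (Nat.clog 2 M - 1) < M :=
          Nat.pow_pred_clog_lt_self one_lt_two (by omega)
        have h2 : ((2:ℝ)) ^ ((Nat.clog 2 M - 1 : ℕ) : ℕ) < (M:ℝ) := by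
          exact_mod_cast h1
        have h3 : ((Nat.clog 2 M - 1 : ℕ) : ℝ) * Real.log 2 < Real.log M := by
          rw [← Real.log_pow]
          exact Real.log_lt_log (by positivity) h2
        have h4 : ((Nat.clog 2 M - 1 : ℕ) : ℝ) = L - 1 := by
          rw [hL, Nat.cast_sub hclog1]; norm_num
        rw [h4] at h3
        have h5 : Real.log M ≤ Real.log k := Real.log_le_log hMpos hMkR
        linarith [h3, h5, hlogk]
      -- lower bound on n^{1-α}
      have hkhalfγ : (k:ℝ) ^ γ / 2 ≤ ((k:ℝ) / 2) ^ γ := by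
        rw [Real.div_rpow (by positivity) (by norm_num : (0:ℝ) ≤ 2)]
        have h2γ : (2:ℝ) ^ γ ≤ 2 := by
          calc (2:ℝ) ^ γ ≤ (2:ℝ) ^ (1:ℝ) :=
                Real.rpow_le_rpow_of_exponent_le (by norm_num) hγ1
            _ = 2 := Real.rpow_one 2
        gcongr
      have hxk : c₇ * ((k:ℝ) / 2) ^ (β / α) ≤ x := by
        rw [hxdef]
        exact mul_le_mul_of_nonneg_left
          (Real.rpow_le_rpow (by positivity) (by linarith) (by positivity)) hc₇pos.le
      have hnhalf : c₇ / 2 * (((k:ℝ) / 2) ^ (β / α)) ≤ (n:ℝ) := by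
        linarith [hnlow, hxk]
      have hn1α : (c₇ / 2) ^ (1 - α) * ((((k:ℝ) / 2) ^ (β / α)) ^ (1 - α)) ≤ (n:ℝ) ^ (1 - α) := by
        rw [← Real.mul_rpow (by positivity) (by positivity)]
        exact Real.rpow_le_rpow (by positivity) hnhalf h1α.le
      have hexp : (((k:ℝ) / 2) ^ (β / α)) ^ (1 - α) = ((k:ℝ) / 2) ^ γ := by
        rw [← Real.rpow_mul (by positivity), hγdef]
        congr 1
        field_simp
      rw [hexp] at hn1α
      have hfin1 : (c₇ / 2) ^ (1 - α) * ((k:ℝ) ^ γ / 2) ≤ (n:ℝ) ^ (1 - α) := by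
        refine le_trans ?_ hn1α
        exact mul_le_mul_of_nonneg_left hkhalfγ (by positivity)
      have hden : 8 * L ≤ 16 * Real.log k / Real.log 2 := by
        rw [le_div_iff₀ hlog2]
        linarith [hLbound]
      have hnt2 : C₁ * ((c₇ / 2) ^ (1 - α) * ((k:ℝ) ^ γ / 2)) / (16 * Real.log k / Real.log 2)
          ≤ (n:ℝ) * t := by
        rw [hnt]
        exact div_le_div₀ (by positivity)
          (mul_le_mul_of_nonneg_left hfin1 hC₁.le) (by positivity) hden
      have hc₉eq : C₁ * ((c₇ / 2) ^ (1 - α) * ((k:ℝ) ^ γ / 2)) / (16 * Real.log k / Real.log 2)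
          = c₉ * (k:ℝ) ^ γ / Real.log k := by
        rw [hc₉]; field_simp; ring
      have hAle : A ≤ c₉ := min_le_right _ _
      have hfinal2 : A * (k:ℝ) ^ γ / Real.log k ≤ c₉ * (k:ℝ) ^ γ / Real.log k := by
        exact div_le_div_of_nonneg_right (mul_le_mul_of_nonneg_right hAle hkγpos) hlogkpos.le
      calc A * (k:ℝ) ^ γ / Real.log k ≤ c₉ * (k:ℝ) ^ γ / Real.log k := hfinal2
        _ ≤ (n:ℝ) * t := by rw [← hc₉eq]; exact hnt2
        _ ≤ sep G k := hfinal
    · -- bad case : contradiction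
      exfalso
      have htML : 2 * t * (M:ℝ) * L = lam * (M:ℝ) / 4 := by
        rw [htdef]; field_simp; ring
      rw [← hL] at hbad
      linarith [hbad, hebdF, hkey, htML, mul_pos hlampos hMpos]
end
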